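/- arXiv:1307.0905 — 4 statements merged into one kernel-verified Lean document; each statement's English description precedes it below -/
import Mathlib

section
/- (Ryser's Theorem) Let G and G' be finite simple graphs on the same vertex set N such that every vertex has the same degree in G as in G' (i.e., d(G) = d(G')). Then there exists a finite sequence of two-switches transforming G into G'. -/
open SimpleGraph

/-- `TwoSwitch G G'` holds when `G'` is obtained from `G` by a single
two-switch: for distinct vertices `a, b, c, d` with `{a,b}, {c,d}` edges of `G`
and `{a,d}, {b,c}` non-edges of `G`, the edges `{a,b}`, `{c,d}` are replaced by
`{a,d}`, `{b,c}`. -/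
def TwoSwitch {V : Type*} (G G' : SimpleGraph V) : Prop :=
  ∃ a b c d : V, a ≠ b ∧ a ≠ c ∧ a ≠ d ∧ b ≠ c ∧ b ≠ d ∧ c ≠ d ∧
    G.Adj a b ∧ G.Adj c d ∧ ¬ G.Adj a d ∧ ¬ G.Adj b c ∧
    G' = SimpleGraph.fromEdgeSet
      ((G.edgeSet \ {s(a, b), s(c, d)}) ∪ {s(a, d), s(b, c)})

namespace RyserAux

open scoped Classical



variable {V : Type*}

lemma switch_edgeSet (G : SimpleGraph V) {a b c d : V} (had : a ≠ d) (hbc : b ≠ c) :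
    (SimpleGraph.fromEdgeSet ((G.edgeSet \ {s(a, b), s(c, d)}) ∪ {s(a, d), s(b, c)})).edgeSet
      = (G.edgeSet \ {s(a, b), s(c, d)}) ∪ {s(a, d), s(b, c)} := by
  rw [edgeSet_fromEdgeSet]
  ext e
  simp only [Set.mem_diff, Set.mem_setOf_eq, and_iff_left_iff_imp]
  rintro (⟨heG, -⟩ | he)
  · exact G.not_isDiag_of_mem_edgeSet heG
  · rcases he with he | he <;> subst he <;> simp [Sym2.mk_isDiag_iff, had, hbc]

lemma set_switch_inv (E : Set (Sym2 V)) {p q r t : Sym2 V}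
    (hp : p ∈ E) (hq : q ∈ E) (hr : r ∉ E) (ht : t ∉ E)
    (hrp : r ≠ p) (hrq : r ≠ q) (htp : t ≠ p) (htq : t ≠ q) :
    ((E \ {p, q} ∪ {r, t}) \ {r, t}) ∪ {p, q} = E := by
  ext e
  simp only [Set.mem_union, Set.mem_diff, Set.mem_insert_iff, Set.mem_singleton_iff]
  constructor
  · rintro (⟨(⟨he, -⟩ | (he | he)), h2⟩ | (he | he)) <;> subst_vars <;> tauto
  · intro he
    by_cases h1 : e = p
    · tauto
    by_cases h2 : e = q
    · tauto
    exact Or.inl ⟨Or.inl ⟨he, by tauto⟩, by rintro (rfl | rfl) <;> tauto⟩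

/-- the reverse switch -/
lemma twoSwitch_symm {G G' : SimpleGraph V} (h : TwoSwitch G G') : TwoSwitch G' G := by
  obtain ⟨a, b, c, d, hab, hac, had, hbc, hbd, hcd, Hab, Hcd, Had, Hbc, hE⟩ := h
  have hES : G'.edgeSet = (G.edgeSet \ {s(a, b), s(c, d)}) ∪ {s(a, d), s(b, c)} := by
    rw [hE]; exact switch_edgeSet G had hbc
  have hswap : s(c, b) = s(b, c) := Sym2.eq_swap
  have hrp : s(a, d) ≠ s(a, b) := by
    simp only [ne_eq, Sym2.eq_iff]; rintro (⟨h1, h2⟩ | ⟨h1, h2⟩) <;> simp_all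
  have hrq : s(a, d) ≠ s(c, d) := by
    simp only [ne_eq, Sym2.eq_iff]; rintro (⟨h1, h2⟩ | ⟨h1, h2⟩) <;> simp_all
  have htp : s(b, c) ≠ s(a, b) := by
    simp only [ne_eq, Sym2.eq_iff]; rintro (⟨h1, h2⟩ | ⟨h1, h2⟩) <;> simp_all
  have htq : s(b, c) ≠ s(c, d) := by
    simp only [ne_eq, Sym2.eq_iff]; rintro (⟨h1, h2⟩ | ⟨h1, h2⟩) <;> simp_all
  have hmem : ∀ e, e ∈ G'.edgeSet ↔
      e ∈ (G.edgeSet \ {s(a, b), s(c, d)} ∪ {s(a, d), s(b, c)} : Set (Sym2 V)) := by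
    intro e; rw [hES]
  refine ⟨a, d, c, b, had, hac, hab, hcd.symm, hbd.symm, hbc.symm, ?_, ?_, ?_, ?_, ?_⟩
  · rw [← mem_edgeSet, hES]; right; left; rfl
  · rw [← mem_edgeSet, hES]; right; right; rw [hswap]; rfl
  · rw [← mem_edgeSet, hES]
    rintro (⟨-, h2⟩ | h2)
    · exact h2 (by left; rfl)
    · simp only [Set.mem_insert_iff, Set.mem_singleton_iff, Sym2.eq_iff] at h2
      rcases h2 with ⟨h3, h4⟩ | ⟨h3, h4⟩ | ⟨h3, h4⟩ | ⟨h3, h4⟩ <;> simp_all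
  · rw [← mem_edgeSet, hES]
    rintro (⟨-, h2⟩ | h2)
    · refine h2 ?_
      right; rw [show s(d, c) = s(c, d) from Sym2.eq_swap]; rfl
    · simp only [Set.mem_insert_iff, Set.mem_singleton_iff, Sym2.eq_iff] at h2
      rcases h2 with ⟨h3, h4⟩ | ⟨h3, h4⟩ | ⟨h3, h4⟩ | ⟨h3, h4⟩ <;> simp_all
  · rw [← SimpleGraph.edgeSet_inj,
      switch_edgeSet G' (a := a) (b := d) (c := c) (d := b) hab hcd.symm,
      show s(c, b) = s(b, c) from Sym2.eq_swap, show s(d, c) = s(c, d) from Sym2.eq_swap, hES]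
    exact (set_switch_inv G.edgeSet (G.mem_edgeSet.mpr Hab) (G.mem_edgeSet.mpr Hcd)
      (fun h => Had (G.mem_edgeSet.mp h)) (fun h => Hbc (G.mem_edgeSet.mp h))
      hrp hrq htp htq).symm


variable {V : Type*}

lemma switch_ns_a (G : SimpleGraph V) {a b c d : V} (hab : a ≠ b) (hac : a ≠ c) (had : a ≠ d) :
    (SimpleGraph.fromEdgeSet ((G.edgeSet \ {s(a, b), s(c, d)}) ∪ {s(a, d), s(b, c)})).neighborSet a
      = insert d (G.neighborSet a \ {b}) := by
  ext u
  simp only [mem_neighborSet, fromEdgeSet_adj, Set.mem_union, Set.mem_diff, Set.mem_insert_iff,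
    Set.mem_singleton_iff, mem_edgeSet, Sym2.eq_iff, true_and, hab, hac, had, false_and, or_false,
    and_false, false_or, ne_eq]
  constructor
  · rintro ⟨h, -⟩; tauto
  · rintro (rfl | ⟨h1, h2⟩)
    · exact ⟨Or.inr rfl, had⟩
    · exact ⟨Or.inl ⟨h1, h2⟩, h1.ne⟩

lemma switch_ns_other (G : SimpleGraph V) {a b c d v : V}
    (ha : v ≠ a) (hb : v ≠ b) (hc : v ≠ c) (hd : v ≠ d) :
    (SimpleGraph.fromEdgeSet ((G.edgeSet \ {s(a, b), s(c, d)}) ∪ {s(a, d), s(b, c)})).neighborSet v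
      = G.neighborSet v := by
  ext u
  simp only [mem_neighborSet, fromEdgeSet_adj, Set.mem_union, Set.mem_diff, Set.mem_insert_iff,
    Set.mem_singleton_iff, mem_edgeSet, Sym2.eq_iff, ha, hb, hc, hd, false_and, or_false,
    false_or, ne_eq]
  exact ⟨fun h => h.1.1, fun h => ⟨⟨h, not_false⟩, h.ne⟩⟩

lemma degree_eq_ncard (G : SimpleGraph V) (v : V) [Fintype (G.neighborSet v)] :
    G.degree v = (G.neighborSet v).ncard := by
  rw [← card_neighborSet_eq_degree, ← Nat.card_eq_fintype_card, Nat.card_coe_set_eq]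

lemma ncard_insert_diff [Fintype V] {s : Set V} {x y : V} (hx : x ∈ s) (hy : y ∉ s) :
    (insert y (s \ {x})).ncard = s.ncard := by
  rw [Set.ncard_insert_of_notMem (by simp [hy]) ((s.toFinite).diff),
    Set.ncard_diff_singleton_add_one hx]

open scoped Classical in
lemma twoSwitch_degree [Fintype V] {G G₂ : SimpleGraph V} (h : TwoSwitch G G₂) (v : V) :
    G₂.degree v = G.degree v := by
  obtain ⟨a, b, c, d, hab, hac, had, hbc, hbd, hcd, Hab, Hcd, Had, Hbc, hE⟩ := h
  subst hE
  rw [degree_eq_ncard, degree_eq_ncard]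
  by_cases hva : a = v
  · subst hva
    rw [switch_ns_a G hab hac had]
    exact ncard_insert_diff Hab (by simpa using Had)
  by_cases hvb : b = v
  · subst hvb
    have e1 : ({s(b, a), s(d, c)} : Set (Sym2 V)) = {s(a, b), s(c, d)} := by
      rw [show s(b, a) = s(a, b) from Sym2.eq_swap, show s(d, c) = s(c, d) from Sym2.eq_swap]
    have e2 : ({s(b, c), s(a, d)} : Set (Sym2 V)) = {s(a, d), s(b, c)} := Set.pair_comm _ _
    have := switch_ns_a G (a := b) (b := a) (c := d) (d := c) hab.symm hbd hbc
    rw [e1, e2] at this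
    rw [this]
    exact ncard_insert_diff Hab.symm (by simpa using Hbc)
  by_cases hvc : c = v
  · subst hvc
    have e1 : ({s(c, d), s(a, b)} : Set (Sym2 V)) = {s(a, b), s(c, d)} := Set.pair_comm _ _
    have e2 : ({s(c, b), s(d, a)} : Set (Sym2 V)) = {s(a, d), s(b, c)} := by
      rw [show s(c, b) = s(b, c) from Sym2.eq_swap, show s(d, a) = s(a, d) from Sym2.eq_swap,
        Set.pair_comm]
    have := switch_ns_a G (a := c) (b := d) (c := a) (d := b) hcd hac.symm hbc.symm
    rw [e1, e2] at this
    rw [this]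
    exact ncard_insert_diff Hcd (fun hx => Hbc (hx.symm))
  by_cases hvd : d = v
  · subst hvd
    have e1 : ({s(d, c), s(b, a)} : Set (Sym2 V)) = {s(a, b), s(c, d)} := by
      rw [show s(d, c) = s(c, d) from Sym2.eq_swap, show s(b, a) = s(a, b) from Sym2.eq_swap,
        Set.pair_comm]
    have e2 : ({s(d, a), s(c, b)} : Set (Sym2 V)) = {s(a, d), s(b, c)} := by
      rw [show s(d, a) = s(a, d) from Sym2.eq_swap, show s(c, b) = s(b, c) from Sym2.eq_swap]
    have := switch_ns_a G (a := d) (b := c) (c := b) (d := a) hcd.symm hbd.symm had.symm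
    rw [e1, e2] at this
    rw [this]
    exact ncard_insert_diff Hcd.symm (fun hx => Had (hx.symm))
  · rw [switch_ns_other G (Ne.symm hva) (Ne.symm hvb) (Ne.symm hvc) (Ne.symm hvd)]


variable {V : Type*}

lemma switch_edgeSet' (G : SimpleGraph V) {a b c d : V} (had : a ≠ d) (hbc : b ≠ c) :
    (SimpleGraph.fromEdgeSet ((G.edgeSet \ {s(a, b), s(c, d)}) ∪ {s(a, d), s(b, c)})).edgeSet
      = (G.edgeSet \ {s(a, b), s(c, d)}) ∪ {s(a, d), s(b, c)} :=
  switch_edgeSet G had hbc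

lemma pair_ne_one {a b c d : V} (hac : a ≠ c) (had : a ≠ d) : s(a, b) ≠ s(c, d) := by
  rw [ne_eq, Sym2.eq_iff]
  rintro (⟨h1, -⟩ | ⟨h1, -⟩) <;> [exact hac h1; exact had h1]

lemma pair_ne_shared {a b d : V} (hbd : b ≠ d) : s(a, b) ≠ s(a, d) := by
  rw [ne_eq, Sym2.eq_iff]
  rintro (⟨-, h2⟩ | ⟨h1, h2⟩)
  · exact hbd h2
  · exact hbd (h2.trans h1)

/-- measure: size of symmetric difference of edge sets -/
noncomputable def m (G G' : SimpleGraph V) : ℕ :=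
  ((G.edgeSet \ G'.edgeSet) ∪ (G'.edgeSet \ G.edgeSet)).ncard

lemma m_comm (G G' : SimpleGraph V) : m G G' = m G' G := by
  unfold m; rw [Set.union_comm]

lemma ncard_lt_of {α : Type*} {S T : Set α} (hT : T.Finite) {u x y : α}
    (hsub : S ⊆ insert u T) (hx : x ∈ T) (hy : y ∈ T) (hxy : x ≠ y)
    (hxS : x ∉ S) (hyS : y ∉ S) (hux : u ≠ x) (huy : u ≠ y) : S.ncard < T.ncard := by
  have hsub2 : S ⊆ insert u (T \ {x, y}) := by
    intro e he
    rcases hsub he with rfl | heT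
    · exact Set.mem_insert _ _
    · refine Set.mem_insert_of_mem _ ⟨heT, ?_⟩
      rintro (rfl | rfl) <;> [exact hxS he; exact hyS he]
  have h1 : S.ncard ≤ (T \ {x, y}).ncard + 1 :=
    le_trans (Set.ncard_le_ncard hsub2 (((hT.diff).insert u)))
      (Set.ncard_insert_le _ _)
  have h2 : (T \ ({x, y} : Set α)).ncard = T.ncard - 2 := by
    rw [Set.ncard_diff (by rintro e (rfl | rfl) <;> assumption) (Set.toFinite _),
      Set.ncard_pair hxy]
  have h3 : 2 ≤ T.ncard := by
    rw [← Set.ncard_pair hxy]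
    exact Set.ncard_le_ncard (by rintro e (rfl | rfl) <;> assumption) hT
  omega

lemma sd_finite [Fintype V] (G G' : SimpleGraph V) :
    ((G.edgeSet \ G'.edgeSet) ∪ (G'.edgeSet \ G.edgeSet)).Finite := Set.toFinite _

/-- Switch shape A: both removed edges are in `H \ K`, one added edge (`ad`) is in `K`. -/
lemma swA [Fintype V] {H K : SimpleGraph V} {a b c d : V}
    (hab : a ≠ b) (hac : a ≠ c) (had : a ≠ d) (hbc : b ≠ c) (hbd : b ≠ d) (hcd : c ≠ d)
    (Hab : H.Adj a b) (Hcd : H.Adj c d) (Had : ¬H.Adj a d) (Hbc : ¬H.Adj b c)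
    (Kab : ¬K.Adj a b) (Kcd : ¬K.Adj c d) (Kad : K.Adj a d) :
    ∃ H₂, TwoSwitch H H₂ ∧ m H₂ K < m H K := by
  set H₂ := SimpleGraph.fromEdgeSet
    ((H.edgeSet \ {s(a, b), s(c, d)}) ∪ {s(a, d), s(b, c)}) with hH₂
  have hE2 : H₂.edgeSet = (H.edgeSet \ {s(a, b), s(c, d)}) ∪ {s(a, d), s(b, c)} :=
    switch_edgeSet' H had hbc
  refine ⟨H₂, ⟨a, b, c, d, hab, hac, had, hbc, hbd, hcd, Hab, Hcd, Had, Hbc, rfl⟩, ?_⟩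
  unfold m
  refine ncard_lt_of (sd_finite H K) (u := s(b, c)) (x := s(a, b)) (y := s(c, d))
    ?_ ?_ ?_ (pair_ne_one hac had) ?_ ?_ (pair_ne_one hab hac).symm
    (pair_ne_one hbc hbd)
  · -- subset
    rintro e (⟨he2, heK⟩ | ⟨heK, he2⟩)
    · rw [hE2] at he2
      rcases he2 with ⟨heH, -⟩ | he
      · exact Set.mem_insert_of_mem _ (Or.inl ⟨heH, heK⟩)
      · simp only [Set.mem_insert_iff, Set.mem_singleton_iff] at he
        rcases he with rfl | rfl
        · exact absurd (K.mem_edgeSet.mpr Kad) heK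
        · exact Set.mem_insert _ _
    · rw [hE2] at he2
      refine Set.mem_insert_of_mem _ (Or.inr ⟨heK, fun heH => he2 ?_⟩)
      refine Or.inl ⟨heH, ?_⟩
      rintro (rfl | h)
      · exact Kab (K.mem_edgeSet.mp heK)
      · rw [Set.mem_singleton_iff] at h; subst h
        exact Kcd (K.mem_edgeSet.mp heK)
  · exact Or.inl ⟨H.mem_edgeSet.mpr Hab, fun h => Kab (K.mem_edgeSet.mp h)⟩
  · exact Or.inl ⟨H.mem_edgeSet.mpr Hcd, fun h => Kcd (K.mem_edgeSet.mp h)⟩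
  · -- s(a,b) not in new diff
    rintro (⟨he2, -⟩ | ⟨heK, -⟩)
    · rw [hE2] at he2
      rcases he2 with ⟨-, hne⟩ | he
      · exact hne (Or.inl rfl)
      · simp only [Set.mem_insert_iff, Set.mem_singleton_iff] at he
        rcases he with he | he
        · exact pair_ne_shared hbd he
        · exact pair_ne_one hab hac he
    · exact Kab (K.mem_edgeSet.mp heK)
  · rintro (⟨he2, -⟩ | ⟨heK, -⟩)
    · rw [hE2] at he2
      rcases he2 with ⟨-, hne⟩ | he
      · exact hne (Or.inr rfl)
      · simp only [Set.mem_insert_iff, Set.mem_singleton_iff] at he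
        rcases he with he | he
        · exact pair_ne_one hac.symm hcd he
        · exact (pair_ne_one hbc hbd).symm he
    · exact Kcd (K.mem_edgeSet.mp heK)

/-- Switch shape B: `ab ∈ H \ K`, `cd ∈ H ∩ K`, and both added edges are in `K \ H`. -/
lemma swB [Fintype V] {H K : SimpleGraph V} {a b c d : V}
    (hab : a ≠ b) (hac : a ≠ c) (had : a ≠ d) (hbc : b ≠ c) (hbd : b ≠ d) (hcd : c ≠ d)
    (Hab : H.Adj a b) (Hcd : H.Adj c d) (Had : ¬H.Adj a d) (Hbc : ¬H.Adj b c)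
    (Kab : ¬K.Adj a b) (Kcd : K.Adj c d) (Kad : K.Adj a d) (Kbc : K.Adj b c) :
    ∃ H₂, TwoSwitch H H₂ ∧ m H₂ K < m H K := by
  set H₂ := SimpleGraph.fromEdgeSet
    ((H.edgeSet \ {s(a, b), s(c, d)}) ∪ {s(a, d), s(b, c)}) with hH₂
  have hE2 : H₂.edgeSet = (H.edgeSet \ {s(a, b), s(c, d)}) ∪ {s(a, d), s(b, c)} :=
    switch_edgeSet' H had hbc
  refine ⟨H₂, ⟨a, b, c, d, hab, hac, had, hbc, hbd, hcd, Hab, Hcd, Had, Hbc, rfl⟩, ?_⟩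
  unfold m
  refine ncard_lt_of (sd_finite H K) (u := s(c, d)) (x := s(a, b)) (y := s(a, d))
    ?_ ?_ ?_ (pair_ne_shared hbd) ?_ ?_ (pair_ne_one hac.symm hbc.symm)
    (pair_ne_one hac.symm hcd)
  · -- subset
    rintro e (⟨he2, heK⟩ | ⟨heK, he2⟩)
    · rw [hE2] at he2
      rcases he2 with ⟨heH, -⟩ | he
      · exact Set.mem_insert_of_mem _ (Or.inl ⟨heH, heK⟩)
      · simp only [Set.mem_insert_iff, Set.mem_singleton_iff] at he
        rcases he with rfl | rfl
        · exact absurd (K.mem_edgeSet.mpr Kad) heK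
        · exact absurd (K.mem_edgeSet.mpr Kbc) heK
    · rw [hE2] at he2
      by_cases hcd' : e = s(c, d)
      · exact Set.mem_insert_iff.mpr (Or.inl hcd')
      refine Set.mem_insert_of_mem _ (Or.inr ⟨heK, fun heH => he2 ?_⟩)
      refine Or.inl ⟨heH, ?_⟩
      rintro (rfl | h)
      · exact Kab (K.mem_edgeSet.mp heK)
      · rw [Set.mem_singleton_iff] at h; exact hcd' h
  · exact Or.inl ⟨H.mem_edgeSet.mpr Hab, fun h => Kab (K.mem_edgeSet.mp h)⟩
  · exact Or.inr ⟨K.mem_edgeSet.mpr Kad, fun h => Had (H.mem_edgeSet.mp h)⟩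
  · -- s(a,b) not in new diff
    rintro (⟨he2, -⟩ | ⟨heK, -⟩)
    · rw [hE2] at he2
      rcases he2 with ⟨-, hne⟩ | he
      · exact hne (Or.inl rfl)
      · simp only [Set.mem_insert_iff, Set.mem_singleton_iff] at he
        rcases he with he | he
        · exact pair_ne_shared hbd he
        · exact pair_ne_one hab hac he
    · exact Kab (K.mem_edgeSet.mp heK)
  · -- s(a,d) not in new diff : it is in both H₂ and K
    rintro (⟨-, he2⟩ | ⟨-, he2⟩)
    · exact he2 (K.mem_edgeSet.mpr Kad)
    · exact he2 (by rw [hE2]; exact Or.inr (Set.mem_insert _ _))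


variable {V : Type*}

lemma degree_eq_ncard' (G : SimpleGraph V) (v : V) [Fintype (G.neighborSet v)] :
    G.degree v = (G.neighborSet v).ncard := by
  rw [← card_neighborSet_eq_degree, ← Nat.card_eq_fintype_card, Nat.card_coe_set_eq]

/-- Red edges: in G but not G'. -/
def Red (G G' : SimpleGraph V) (x y : V) : Prop := G.Adj x y ∧ ¬ G'.Adj x y

lemma Red.symm {G G' : SimpleGraph V} {x y : V} (h : Red G G' x y) : Red G G' y x :=
  ⟨h.1.symm, fun h2 => h.2 h2.symm⟩

lemma Red.ne {G G' : SimpleGraph V} {x y : V} (h : Red G G' x y) : x ≠ y := h.1.ne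

lemma red_blu_absurd {G G' : SimpleGraph V} {x y : V}
    (h : Red G G' x y) (h' : Red G' G x y) : False := h.2 h'.1

lemma red_exch [Fintype V] {G G' : SimpleGraph V} (hdeg : ∀ v, G.degree v = G'.degree v)
    (v : V) (h : ∃ u, Red G' G v u) : ∃ u, Red G G' v u := by
  classical
  set A := G.neighborSet v with hA
  set B := G'.neighborSet v with hB
  have hcard : A.ncard = B.ncard := by
    rw [← degree_eq_ncard', ← degree_eq_ncard']; exact hdeg v
  have h1 : (A ∩ B).ncard + (A \ B).ncard = A.ncard :=
    Set.ncard_inter_add_ncard_diff_eq_ncard A B (Set.toFinite _)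
  have h2 : (B ∩ A).ncard + (B \ A).ncard = B.ncard :=
    Set.ncard_inter_add_ncard_diff_eq_ncard B A (Set.toFinite _)
  have h3 : (A ∩ B).ncard = (B ∩ A).ncard := by rw [Set.inter_comm]
  have h4 : (B \ A).Nonempty := by
    obtain ⟨u, hu1, hu2⟩ := h
    exact ⟨u, hu1, hu2⟩
  have h5 : 0 < (B \ A).ncard := (Set.ncard_pos (Set.toFinite _)).mpr h4
  have h6 : 0 < (A \ B).ncard := by omega
  obtain ⟨u, hu1, hu2⟩ := (Set.ncard_pos (Set.toFinite _)).mp h6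
  exact ⟨u, hu1, hu2⟩

/-- pick a `Red G G'`-neighbor of `v` if one exists -/
noncomputable def rn (G G' : SimpleGraph V) (v : V) : V :=
  if h : ∃ u, Red G G' v u then h.choose else v

lemma rn_spec {G G' : SimpleGraph V} {v : V} (h : ∃ u, Red G G' v u) :
    Red G G' v (rn G G' v) := by
  rw [rn, dif_pos h]; exact h.choose_spec

/-- the infinite alternating sequence of pairs: each pair is a red edge,
consecutive pairs are linked by a blue edge -/
noncomputable def pseq (G G' : SimpleGraph V) (p0 : V × V) : ℕ → V × V
  | 0 => p0
  | n+1 =>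
      let w := rn G' G (pseq G G' p0 n).2
      (w, rn G G' w)

lemma pseq_spec [Fintype V] {G G' : SimpleGraph V} (hdeg : ∀ v, G.degree v = G'.degree v)
    (hdeg' : ∀ v, G'.degree v = G.degree v) {p0 : V × V} (h0 : Red G G' p0.1 p0.2) :
    ∀ n, Red G G' (pseq G G' p0 n).1 (pseq G G' p0 n).2 ∧
      Red G' G (pseq G G' p0 n).2 (pseq G G' p0 (n+1)).1 := by
  have key : ∀ n, Red G G' (pseq G G' p0 n).1 (pseq G G' p0 n).2 → 
      Red G' G (pseq G G' p0 n).2 (pseq G G' p0 (n+1)).1 ∧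
      Red G G' (pseq G G' p0 (n+1)).1 (pseq G G' p0 (n+1)).2 := by
    intro n hn
    have hblue : ∃ u, Red G' G (pseq G G' p0 n).2 u :=
      red_exch hdeg' _ ⟨(pseq G G' p0 n).1, hn.symm⟩
    have hb := rn_spec hblue
    have hred : ∃ u, Red G G' (rn G' G (pseq G G' p0 n).2) u :=
      red_exch hdeg _ ⟨(pseq G G' p0 n).2, hb.symm⟩
    have hr := rn_spec hred
    exact ⟨hb, hr⟩
  intro n
  induction n with
  | zero => exact ⟨h0, (key 0 h0).1⟩
  | succ n ih => exact ⟨(key n ih.1).2, (key (n+1) (key n ih.1).2).1⟩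

/-- closed alternating walk of length `2n` -/
def IsCAW (G G' : SimpleGraph V) (n : ℕ) (f : ℕ → V) : Prop :=
  2 ≤ n ∧ f (2*n) = f 0 ∧ (∀ i < n, Red G G' (f (2*i)) (f (2*i+1))) ∧
    (∀ i < n, Red G' G (f (2*i+1)) (f (2*i+2)))

lemma exists_CAW [Fintype V] {G G' : SimpleGraph V} (hdeg : ∀ v, G.degree v = G'.degree v)
    {x y : V} (hxy : Red G G' x y) : ∃ n f, IsCAW G G' n f := by
  have hdeg' : ∀ v, G'.degree v = G.degree v := fun v => (hdeg v).symm
  set p := pseq G G' (x, y) with hp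
  have hspec := pseq_spec hdeg hdeg' (p0 := (x, y)) hxy
  obtain ⟨i, j, hne, heq⟩ := Finite.exists_ne_map_eq_of_infinite (fun k : ℕ => p (2*k))
  wlog hij : i < j generalizing i j
  · exact this j i hne.symm heq.symm (by omega)
  set f : ℕ → V := fun t => if Even t then (p (2*i + t/2)).1 else (p (2*i + t/2)).2 with hf
  have hf1 : ∀ s, f (2*s) = (p (2*i + s)).1 := fun s => by
    have h1 : Even (2*s) := even_two_mul s
    have h2 : 2*s/2 = s := by omega
    simp only [hf, if_pos h1, h2]
  have hf2 : ∀ s, f (2*s+1) = (p (2*i + s)).2 := fun s => by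
    have h1 : ¬ Even (2*s+1) := by rw [Nat.even_iff]; omega
    have h2 : (2*s+1)/2 = s := by omega
    simp only [hf, if_neg h1, h2]
  refine ⟨2*j - 2*i, f, by omega, ?_, ?_, ?_⟩
  · rw [show 2*(2*j-2*i) = 2*(2*j-2*i) from rfl, hf1, show 2*i + (2*j-2*i) = 2*j by omega]
    rw [show (0:ℕ) = 2*0 from rfl, hf1]
    rw [show 2*i+0 = 2*i by ring, ← heq]
  · intro s hs
    rw [hf1, hf2]
    exact (hspec (2*i + s)).1
  · intro s hs
    rw [hf2, show 2*s+2 = 2*(s+1) by ring, hf1, show 2*i + (s+1) = (2*i+s)+1 by ring]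
    exact (hspec (2*i + s)).2


lemma key [Fintype V] {G G' : SimpleGraph V} (hdeg : ∀ v, G.degree v = G'.degree v)
    (hne : G ≠ G') :
    (∃ H₂, TwoSwitch G H₂ ∧ m H₂ G' < m G G') ∨
      (∃ H₂, TwoSwitch G' H₂ ∧ m H₂ G < m G' G) := by
  -- there is a red edge
  have hex_red : ∃ x y, Red G G' x y := by
    by_contra hno
    push_neg at hno
    refine hne ?_
    ext v w
    constructor
    · intro ha
      by_contra hna
      exact hno v w ⟨ha, hna⟩
    · intro ha'
      by_contra hna
      obtain ⟨u, hu⟩ := red_exch hdeg v ⟨w, ⟨ha', hna⟩⟩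
      exact hno v u hu
  obtain ⟨x0, y0, hred0⟩ := hex_red
  have hP : ∃ n, ∃ f, IsCAW G G' n f := exists_CAW hdeg hred0
  set N := Nat.find hP with hNdef
  obtain ⟨f, hfC⟩ := Nat.find_spec hP
  have hmin : ∀ m, m < N → ¬∃ g, IsCAW G G' m g := fun m hm => Nat.find_min hP hm
  obtain ⟨hN2, hclose, hRed, hBlu⟩ := hfC
  have hR0 : Red G G' (f 0) (f 1) := by
    have := hRed 0 (by omega); rwa [show 2*0 = 0 by norm_num, show 2*0+1 = 1 by norm_num] at this
  have hB0 : Red G' G (f 1) (f 2) := by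
    have := hBlu 0 (by omega); rwa [show 2*0+1 = 1 by norm_num, show 2*0+2 = 2 by norm_num] at this
  have hR1 : Red G G' (f 2) (f 3) := by
    have := hRed 1 (by omega); rwa [show 2*1 = 2 by norm_num, show 2*1+1 = 3 by norm_num] at this
  have hB1 : Red G' G (f 3) (f 4) := by
    have := hBlu 1 (by omega); rwa [show 2*1+1 = 3 by norm_num, show 2*1+2 = 4 by norm_num] at this
  have ne01 : f 0 ≠ f 1 := hR0.ne
  have ne12 : f 1 ≠ f 2 := hB0.ne
  have ne23 : f 2 ≠ f 3 := hR1.ne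
  have ne02 : f 0 ≠ f 2 := by
    intro h
    exact red_blu_absurd hR0 (by rw [h]; exact hB0.symm)
  have ne13 : f 1 ≠ f 3 := by
    intro h
    exact red_blu_absurd (by rw [h]; exact hR1.symm) hB0
  have ne24 : f 2 ≠ f 4 := by
    intro h
    exact red_blu_absurd hR1.symm (by rw [h]; exact hB1)
  -- the "shorter walk" contradiction for a red chord f 0 - f 3
  have shorter1 : ¬ Red G G' (f 0) (f 3) := by
    intro h03
    by_cases h3 : 3 ≤ N
    · set g : ℕ → V := fun t => if t = 0 then f 0 else f (t+2) with hg
      have hg0 : g 0 = f 0 := by simp [hg]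
      have hgt : ∀ t, t ≠ 0 → g t = f (t+2) := fun t ht => by rw [hg]; simp [ht]
      have c1 : g (2*(N-1)) = g 0 := by
        rw [hg0, hgt _ (by omega), show 2*(N-1)+2 = 2*N by omega, hclose]
      have c2 : ∀ i < N-1, Red G G' (g (2*i)) (g (2*i+1)) := by
        intro s hs
        rcases Nat.eq_zero_or_pos s with rfl | hpos
        · show Red G G' (g 0) (g 1)
          rw [hg0, hgt 1 (by omega)]
          exact h03
        · rw [hgt _ (by omega), hgt _ (by omega), show 2*s+2 = 2*(s+1) by ring,
            show 2*s+1+2 = 2*(s+1)+1 by ring]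
          exact hRed (s+1) (by omega)
      have c3 : ∀ i < N-1, Red G' G (g (2*i+1)) (g (2*i+2)) := by
        intro s hs
        rw [hgt _ (by omega), hgt _ (by omega), show 2*s+1+2 = 2*(s+1)+1 by ring,
          show 2*s+2+2 = 2*(s+1)+2 by ring]
        exact hBlu (s+1) (by omega)
      exact hmin (N-1) (by omega) ⟨g, by omega, c1, c2, c3⟩
    · -- N = 2, so f 4 = f 0 and the blue edge f3-f4 clashes with the red chord
      have hN2' : N = 2 := by omega
      have h40 : f 4 = f 0 := by
        have := hclose
        have h4 : 2 * Nat.find hP = 4 := by rw [← hNdef, hN2']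
        rwa [h4] at this
      rw [h40] at hB1
      exact red_blu_absurd h03 hB1.symm
  by_cases hA : f 0 = f 3
  · -- degenerate case: triangle
    have hN3 : 3 ≤ N := by
      by_contra h3
      have hN2' : N = 2 := by omega
      have h40 : f 4 = f 0 := by
        have := hclose
        have h4 : 2 * Nat.find hP = 4 := by rw [← hNdef, hN2']
        rwa [h4] at this
      rw [h40, ← hA] at hB1
      exact hB1.ne rfl
    have hR1' : Red G G' (f 2) (f 0) := by rw [hA]; exact hR1
    have hB1' : Red G' G (f 0) (f 4) := by rw [hA]; exact hB1
    have ne40 : f 4 ≠ f 0 := fun h => hB1'.ne h.symm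
    have ne14 : f 1 ≠ f 4 := by
      intro h
      exact red_blu_absurd hR0 (by rw [h]; exact hB1')
    by_cases h24 : G'.Adj (f 2) (f 4)
    · by_cases h14' : G'.Adj (f 1) (f 4)
      · by_cases h14 : G.Adj (f 1) (f 4)
        · -- common edge (f1,f4): switch in G, tuple (f0, f2, f1, f4)
          refine Or.inl ?_
          exact swB (H := G) (K := G') ne02 hR0.ne ne40.symm (Ne.symm ne12) ne24 ne14
            hR1'.1.symm h14 hB1'.2 (fun h => hB0.2 h.symm)
            (fun h => hR1'.2 h.symm) h14' hB1'.1 hB0.1.symm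
        · -- blue edge (f1,f4): shorter walk
          exfalso
          have hB14 : Red G' G (f 1) (f 4) := ⟨h14', h14⟩
          set g : ℕ → V := fun t => if t ≤ 1 then f t else f (t+2) with hg
          have hg0 : g 0 = f 0 := by simp [hg]
          have hg1 : g 1 = f 1 := by simp [hg]
          have hgt : ∀ t, 1 < t → g t = f (t+2) := fun t ht => by
            rw [hg]; simp [Nat.not_le.mpr ht]
          have c1 : g (2*(N-1)) = g 0 := by
            rw [hg0, hgt _ (by omega), show 2*(N-1)+2 = 2*N by omega, hclose]
          have c2 : ∀ i < N-1, Red G G' (g (2*i)) (g (2*i+1)) := by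
            intro s hs
            rcases Nat.eq_zero_or_pos s with rfl | hpos
            · show Red G G' (g 0) (g 1)
              rw [hg0, hg1]
              exact hR0
            · rw [hgt _ (by omega), hgt _ (by omega), show 2*s+2 = 2*(s+1) by ring,
                show 2*s+1+2 = 2*(s+1)+1 by ring]
              exact hRed (s+1) (by omega)
          have c3 : ∀ i < N-1, Red G' G (g (2*i+1)) (g (2*i+2)) := by
            intro s hs
            rcases Nat.eq_zero_or_pos s with rfl | hpos
            · show Red G' G (g 1) (g 2)
              rw [hg1, hgt 2 (by omega)]
              exact hB14
            · rw [hgt _ (by omega), hgt _ (by omega), show 2*s+1+2 = 2*(s+1)+1 by ring,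
                show 2*s+2+2 = 2*(s+1)+2 by ring]
              exact hBlu (s+1) (by omega)
          exact hmin (N-1) (by omega) ⟨g, by omega, c1, c2, c3⟩
      · -- switch in G', tuple (f2, f1, f4, f0)
        refine Or.inr ?_
        exact swA (H := G') (K := G) (Ne.symm ne12) ne24 ne02.symm ne14 (Ne.symm ne01) ne40
          hB0.1.symm hB1'.1.symm hR1'.2 h14'
          (fun h => hB0.2 h.symm) (fun h => hB1'.2 h.symm) hR1'.1
    · -- switch in G', tuple (f1, f2, f4, f0)
      refine Or.inr ?_
      exact swA (H := G') (K := G) ne12 ne14 (Ne.symm ne01) ne24 ne02.symm ne40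
        hB0.1 hB1'.1.symm (fun h => hR0.2 h.symm) h24
        hB0.2 (fun h => hB1'.2 h.symm) hR0.1.symm
  · -- main case: f 0, f 1, f 2, f 3 distinct
    by_cases hG : G.Adj (f 0) (f 3)
    · by_cases hG' : G'.Adj (f 0) (f 3)
      · -- common chord: switch in G', tuple (f1, f2, f3, f0)
        refine Or.inr ?_
        exact swB (H := G') (K := G) ne12 ne13 (Ne.symm ne01) ne23 ne02.symm (Ne.symm hA)
          hB0.1 hG'.symm (fun h => hR0.2 h.symm) hR1.2
          hB0.2 hG.symm hR0.1.symm hR1.1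
      · -- red chord
        exact absurd ⟨hG, hG'⟩ shorter1
    · -- non-edge chord: switch in G, tuple (f1, f0, f3, f2)
      refine Or.inl ?_
      exact swA (H := G) (K := G') (Ne.symm ne01) ne13 ne12 hA ne02 (Ne.symm ne23)
        hR0.1.symm hR1.1.symm hB0.2 hG
        (fun h => hR0.2 h.symm) (fun h => hR1.2 h.symm) hB0.1

end RyserAux

open scoped Classical in
theorem stmt_8 {V : Type*} [Fintype V] (G G' : SimpleGraph V)
    (hdeg : ∀ v : V, G.degree v = G'.degree v) :
    Relation.ReflTransGen TwoSwitch G G' := by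
  classical
  have main : ∀ (n : ℕ) (G G' : SimpleGraph V), (∀ v, G.degree v = G'.degree v) →
      RyserAux.m G G' ≤ n → Relation.ReflTransGen TwoSwitch G G' := by
    intro n
    induction n with
    | zero =>
      intro G G' hdeg hm
      have h0 : RyserAux.m G G' = 0 := Nat.le_zero.mp hm
      have hempty : (G.edgeSet \ G'.edgeSet) ∪ (G'.edgeSet \ G.edgeSet) = ∅ :=
        (Set.ncard_eq_zero (RyserAux.sd_finite G G')).mp h0
      have hGG : G = G' := by
        rw [← SimpleGraph.edgeSet_inj]
        rw [Set.union_empty_iff] at hempty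
        exact Set.Subset.antisymm (Set.diff_eq_empty.mp hempty.1)
          (Set.diff_eq_empty.mp hempty.2)
      rw [hGG]
    | succ n ih =>
      intro G G' hdeg hm
      by_cases hGG : G = G'
      · rw [hGG]
      rcases RyserAux.key hdeg hGG with ⟨H₂, hsw, hlt⟩ | ⟨H₂, hsw, hlt⟩
      · have hdeg2 : ∀ v, H₂.degree v = G'.degree v := fun v =>
          (RyserAux.twoSwitch_degree hsw v).trans (hdeg v)
        exact Relation.ReflTransGen.head hsw (ih H₂ G' hdeg2 (by omega))
      · have hlt2 : RyserAux.m G H₂ < RyserAux.m G G' := by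
          rw [RyserAux.m_comm G H₂, RyserAux.m_comm G G']; exact hlt
        have hdeg2 : ∀ v, G.degree v = H₂.degree v := fun v =>
          (hdeg v).trans (RyserAux.twoSwitch_degree hsw v).symm
        exact (ih G H₂ hdeg2 (by omega)).tail (RyserAux.twoSwitch_symm hsw)
  exact main (RyserAux.m G G') G G' hdeg le_rfl
end

section
/- Let G = (N, E) be a finite simple graph, let {a,b} ∈ E and {c,d} ∈ E be edges lying in two different connected components C₁ and C₂ of G respectively, and suppose {a,b} is not a bridge of G (i.e., a and b remain connected after deleting the edge {a,b}). Then in the graph G' obtained by the two-switch replacing {a,b} and {c,d} by {a,d} and {b,c}, all vertices of C₁ ∪ C₂ lie in a single connected component, and the number of connected components of G' is exactly one less than the number of connected components of G. -/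
/- STATEMENT 10: Let `{a,b}` and `{c,d}` be edges of a finite simple graph `G`
lying in two different connected components `C₁` and `C₂`, and suppose `{a,b}`
is not a bridge (`a` and `b` remain connected after deleting `{a,b}`).  Then
in the graph `G'` obtained by the two-switch replacing `{a,b}`, `{c,d}` by
`{a,d}`, `{b,c}`, all vertices of `C₁ ∪ C₂` lie in a single connected
component, and `G'` has exactly one fewer connected component than `G`. -/
open SimpleGraph in
theorem stmt_10 {V : Type*} [Fintype V] (G : SimpleGraph V) (a b c d : V)
    (hab : G.Adj a b) (hcd : G.Adj c d)
    (hcomp : G.connectedComponentMk a ≠ G.connectedComponentMk c)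
    (hnotbridge : (G.deleteEdges {s(a, b)}).Reachable a b) :
    (∀ v : V,
      (G.connectedComponentMk v = G.connectedComponentMk a ∨
        G.connectedComponentMk v = G.connectedComponentMk c) →
      (SimpleGraph.fromEdgeSet
          ((G.edgeSet \ {s(a, b), s(c, d)}) ∪ {s(a, d), s(b, c)})).connectedComponentMk v =
        (SimpleGraph.fromEdgeSet
          ((G.edgeSet \ {s(a, b), s(c, d)}) ∪ {s(a, d), s(b, c)})).connectedComponentMk a) ∧
    Nat.card (SimpleGraph.fromEdgeSet
        ((G.edgeSet \ {s(a, b), s(c, d)}) ∪ {s(a, d), s(b, c)})).ConnectedComponent + 1 =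
      Nat.card G.ConnectedComponent := by
  classical
  set E' : Set (Sym2 V) := (G.edgeSet \ {s(a, b), s(c, d)}) ∪ {s(a, d), s(b, c)} with hE'
  set G' : SimpleGraph V := SimpleGraph.fromEdgeSet E' with hG'
  -- basic component facts
  have hmkb : G.connectedComponentMk b = G.connectedComponentMk a :=
    (SimpleGraph.ConnectedComponent.sound hab.reachable).symm
  have hmkd : G.connectedComponentMk d = G.connectedComponentMk c :=
    (SimpleGraph.ConnectedComponent.sound hcd.reachable).symm
  have hne_ad : a ≠ d := by rintro rfl; exact hcomp hmkd
  have hne_bc : b ≠ c := by rintro rfl; exact hcomp (hmkb ▸ rfl)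
  -- the walk from a to b avoiding both removed edges
  obtain ⟨p⟩ := hnotbridge
  have hpe : ∀ e ∈ p.edges, e ∈ G'.edgeSet := by
    intro e he
    have he1 : e ∈ (G.deleteEdges {s(a, b)}).edgeSet := p.edges_subset_edgeSet he
    rw [SimpleGraph.edgeSet_deleteEdges] at he1
    have hecd : e ≠ s(c, d) := by
      rintro rfl
      have hc : c ∈ p.support := p.fst_mem_support_of_mem_edges he
      have : (G.deleteEdges {s(a, b)}).Reachable a c := ⟨p.takeUntil c hc⟩
      exact hcomp (SimpleGraph.ConnectedComponent.sound
        (this.mono (G.deleteEdges_le _)))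
    rw [SimpleGraph.edgeSet_fromEdgeSet]
    refine ⟨Or.inl ⟨he1.1, ?_⟩, ?_⟩
    · intro h
      rcases h with h | h
      · exact he1.2 h
      · exact hecd h
    · exact SimpleGraph.not_isDiag_of_mem_edgeSet G he1.1
  have hab' : G'.Reachable a b := ⟨p.transfer G' hpe⟩
  have had' : G'.Adj a d := by
    rw [hG', SimpleGraph.fromEdgeSet_adj]
    exact ⟨Or.inr (Or.inl rfl), hne_ad⟩
  have hbc' : G'.Adj b c := by
    rw [hG', SimpleGraph.fromEdgeSet_adj]
    exact ⟨Or.inr (Or.inr rfl), hne_bc⟩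
  have hcd' : G'.Reachable c d :=
    (hbc'.symm.reachable.trans hab'.symm).trans had'.reachable
  -- G-reachability implies G'-reachability
  have key : ∀ u v : V, G.Adj u v → G'.Reachable u v := by
    intro u v huv
    by_cases h1 : s(u, v) = s(a, b)
    · rcases Sym2.eq_iff.mp h1 with ⟨rfl, rfl⟩ | ⟨rfl, rfl⟩
      · exact hab'
      · exact hab'.symm
    by_cases h2 : s(u, v) = s(c, d)
    · rcases Sym2.eq_iff.mp h2 with ⟨rfl, rfl⟩ | ⟨rfl, rfl⟩
      · exact hcd'
      · exact hcd'.symm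
    · refine SimpleGraph.Adj.reachable ?_
      rw [hG', SimpleGraph.fromEdgeSet_adj]
      exact ⟨Or.inl ⟨G.mem_edgeSet.mpr huv, by
        intro h; rcases h with h | h; exact h1 h; exact h2 h⟩, huv.ne⟩
  have keyR : ∀ u v : V, G.Reachable u v → G'.Reachable u v := by
    intro u v huv
    obtain ⟨q⟩ := huv
    induction q with
    | nil => exact Reachable.refl _
    | cons h q ih => exact (key _ _ h).trans ih
  have hac' : G'.Reachable a c := had'.reachable.trans hcd'.symm
  constructor
  · intro v hv
    rcases hv with h | h
    · exact SimpleGraph.ConnectedComponent.sound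
        (keyR v a (SimpleGraph.ConnectedComponent.exact h))
    · exact SimpleGraph.ConnectedComponent.sound
        ((keyR v c (SimpleGraph.ConnectedComponent.exact h)).trans hac'.symm)
  -- counting
  · -- forward map
    have fwd : ∀ (u w : V) (q : G.Walk u w), q.IsPath →
        G'.connectedComponentMk u = G'.connectedComponentMk w := by
      intro u w q _
      exact SimpleGraph.ConnectedComponent.sound (keyR u w ⟨q⟩)
    let f : G.ConnectedComponent → G'.ConnectedComponent :=
      SimpleGraph.ConnectedComponent.lift (fun v => G'.connectedComponentMk v) fwd
    let h : V → G.ConnectedComponent := fun v =>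
      if G.connectedComponentMk v = G.connectedComponentMk c then G.connectedComponentMk a
      else G.connectedComponentMk v
    have hha : h a = G.connectedComponentMk a := if_neg hcomp
    have hhd : h d = G.connectedComponentMk a := if_pos hmkd
    have hhb : h b = G.connectedComponentMk a := by
      have : ¬ G.connectedComponentMk b = G.connectedComponentMk c := by
        rw [hmkb]; exact hcomp
      exact (if_neg this).trans hmkb
    have hhc : h c = G.connectedComponentMk a := if_pos rfl
    have hadj : ∀ u v : V, G'.Adj u v → h u = h v := by
      intro u v huv
      rw [hG', SimpleGraph.fromEdgeSet_adj] at huv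
      rcases huv.1 with ⟨hmem, _⟩ | hmem
      · have h2 : G.connectedComponentMk u = G.connectedComponentMk v :=
          SimpleGraph.ConnectedComponent.sound hmem.reachable
        simp only [h, h2]
      · rcases hmem with hm | hm
        all_goals rcases Sym2.eq_iff.mp hm with ⟨rfl, rfl⟩ | ⟨rfl, rfl⟩
        · rw [hha, hhd]
        · rw [hha, hhd]
        · rw [hhb, hhc]
        · rw [hhb, hhc]
    have gwd : ∀ (u w : V) (q : G'.Walk u w), q.IsPath → h u = h w := by
      intro u w q hq
      clear hq
      induction q with
      | nil => rfl
      | cons hadj' q ih => exact (hadj _ _ hadj').trans ih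
    let g : G'.ConnectedComponent → G.ConnectedComponent :=
      SimpleGraph.ConnectedComponent.lift h gwd
    have hgne : ∀ x : G'.ConnectedComponent, g x ≠ G.connectedComponentMk c := by
      refine SimpleGraph.ConnectedComponent.ind ?_
      intro v
      show h v ≠ _
      simp only [h]
      split
      · exact hcomp
      · assumption
    let e : {x : G.ConnectedComponent // x ≠ G.connectedComponentMk c} ≃ G'.ConnectedComponent :=
      { toFun := fun x => f x.1
        invFun := fun x => ⟨g x, hgne x⟩
        left_inv := by
          rintro ⟨x, hx⟩
          obtain ⟨v, rfl⟩ := x.exists_rep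
          exact Subtype.ext (if_neg hx)
        right_inv := by
          refine SimpleGraph.ConnectedComponent.ind ?_
          intro v
          show f (h v) = _
          simp only [h]
          split
          · rename_i hvc
            show G'.connectedComponentMk a = G'.connectedComponentMk v
            exact SimpleGraph.ConnectedComponent.sound
              (hac'.trans (keyR v c (SimpleGraph.ConnectedComponent.exact hvc)).symm)
          · rfl }
    have hcard : Nat.card G'.ConnectedComponent =
        Nat.card {x : G.ConnectedComponent // x ≠ G.connectedComponentMk c} :=
      Nat.card_congr e.symm
    rw [hcard]
    have : Finite G.ConnectedComponent := Quot.finite _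
    have inst : Fintype G.ConnectedComponent := Fintype.ofFinite _
    rw [Nat.card_eq_fintype_card, Nat.card_eq_fintype_card]
    apply (eq_tsub_iff_add_eq_of_le (Nat.succ_le_of_lt (Fintype.card_pos_iff.mpr
      ⟨G.connectedComponentMk c⟩))).mp
    convert (Fintype.card_subtype_compl _).trans
      (congr_arg _ (Fintype.card_subtype_eq (G.connectedComponentMk c)))
end

section
/- Let G be a finite simple graph whose degree sequence admits a connected realization, i.e., there exists a connected simple graph G'' on the same vertex set with d(G'') = d(G). Then there exists a finite sequence of two-switches transforming G into a connected simple graph with the same degree sequence. -/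
namespace TwoSwitchAux

open SimpleGraph
open scoped Classical

variable {V : Type*}

def swSet (G : SimpleGraph V) (a b c d : V) : Set (Sym2 V) :=
  (G.edgeSet \ {s(a, b), s(c, d)}) ∪ {s(a, d), s(b, c)}

lemma switch_adj {G : SimpleGraph V} {a b c d : V}
    (hadne : a ≠ d) (hbcne : b ≠ c) (x y : V) :
    (SimpleGraph.fromEdgeSet (swSet G a b c d)).Adj x y ↔
      ((G.Adj x y ∧ s(x,y) ≠ s(a,b) ∧ s(x,y) ≠ s(c,d)) ∨ s(x,y) = s(a,d) ∨ s(x,y) = s(b,c)) := by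
  rw [SimpleGraph.fromEdgeSet_adj]
  constructor
  · rintro ⟨h1, h2⟩
    rcases h1 with ⟨he, hne⟩ | he
    · exact Or.inl ⟨he, by simpa using hne⟩
    · exact Or.inr (by simpa using he)
  · intro h1
    rcases h1 with ⟨he, hh2, h3⟩ | he | he
    · exact ⟨Or.inl ⟨he, by simp [hh2, h3]⟩, he.ne⟩
    · refine ⟨Or.inr (by simp [he]), ?_⟩
      rintro rfl
      rw [Sym2.eq_iff] at he
      rcases he with ⟨h, h2⟩ | ⟨h, h2⟩ <;> simp_all
    · refine ⟨Or.inr (by simp [he]), ?_⟩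
      rintro rfl
      rw [Sym2.eq_iff] at he
      rcases he with ⟨h, h2⟩ | ⟨h, h2⟩ <;> simp_all

lemma switch_nbr_a {G : SimpleGraph V} {a b c d : V}
    (h1 : a ≠ b) (h2 : a ≠ c) (h3 : a ≠ d) (h4 : b ≠ c) :
    (SimpleGraph.fromEdgeSet (swSet G a b c d)).neighborSet a
      = insert d (G.neighborSet a \ {b}) := by
  ext v
  simp only [SimpleGraph.mem_neighborSet, switch_adj h3 h4, Set.mem_insert_iff, Set.mem_diff,
    Set.mem_singleton_iff, ne_eq, Sym2.eq_iff, h1, h2, h3, false_and, and_false, or_false,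
    false_or, true_and, eq_self_iff_true]
  tauto

lemma switch_nbr_other {G : SimpleGraph V} {a b c d : V}
    (h3 : a ≠ d) (h4 : b ≠ c) {x : V}
    (hxa : x ≠ a) (hxb : x ≠ b) (hxc : x ≠ c) (hxd : x ≠ d) :
    (SimpleGraph.fromEdgeSet (swSet G a b c d)).neighborSet x = G.neighborSet x := by
  ext v
  simp only [SimpleGraph.mem_neighborSet, switch_adj h3 h4, ne_eq, Sym2.eq_iff, hxa, hxb, hxc,
    hxd, false_and, false_or, or_false]
  tauto

lemma swSet_badc (G : SimpleGraph V) (a b c d : V) :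
    swSet G b a d c = swSet G a b c d := by
  rw [swSet, swSet, show s(b,a) = s(a,b) from Sym2.eq_swap,
    show s(d,c) = s(c,d) from Sym2.eq_swap, Set.pair_comm (s(b,c)) (s(a,d))]

lemma swSet_cdab (G : SimpleGraph V) (a b c d : V) :
    swSet G c d a b = swSet G a b c d := by
  rw [swSet, swSet, Set.pair_comm (s(c,d)) (s(a,b)),
    show s(c,b) = s(b,c) from Sym2.eq_swap, show s(d,a) = s(a,d) from Sym2.eq_swap,
    Set.pair_comm (s(b,c)) (s(a,d))]

lemma swSet_dcba (G : SimpleGraph V) (a b c d : V) :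
    swSet G d c b a = swSet G a b c d := by
  rw [show swSet G d c b a = swSet G c d a b from swSet_badc G c d a b, swSet_cdab]

/-- Building a `TwoSwitch` from the data. -/
lemma twoSwitch_mk {G : SimpleGraph V} {a b c d : V}
    (h1 : a ≠ b) (h2 : a ≠ c) (h3 : a ≠ d) (h4 : b ≠ c) (h5 : b ≠ d) (h6 : c ≠ d)
    (hab : G.Adj a b) (hcd : G.Adj c d) (had : ¬ G.Adj a d) (hbc : ¬ G.Adj b c) :
    TwoSwitch G (SimpleGraph.fromEdgeSet (swSet G a b c d)) :=
  ⟨a, b, c, d, h1, h2, h3, h4, h5, h6, hab, hcd, had, hbc, rfl⟩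

lemma degree_eq_ncard [Fintype V] (G : SimpleGraph V) (v : V) :
    G.degree v = (G.neighborSet v).ncard := by
  rw [← SimpleGraph.card_neighborSet_eq_degree, Set.ncard_eq_toFinset_card']
  simp

lemma degree_eq_ncard' [Fintype V] (G : SimpleGraph V) (v : V) [Fintype (G.neighborSet v)] :
    G.degree v = (G.neighborSet v).ncard := by
  rw [← SimpleGraph.card_neighborSet_eq_degree, Set.ncard_eq_toFinset_card']
  simp

lemma ncard_insert_diff [Finite V] {N : Set V} {x y : V} (hx : x ∈ N) (hy : y ∉ N) :
    (insert y (N \ {x})).ncard = N.ncard := by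
  have hyd : y ∉ N \ {x} := fun hc => hy hc.1
  rw [Set.ncard_insert_of_notMem hyd (Set.toFinite _),
    Set.ncard_diff_singleton_add_one hx (Set.toFinite _)]

lemma twoSwitch_degree_eq [Fintype V] {G G' : SimpleGraph V} (h : TwoSwitch G G') (v : V) :
    G'.degree v = G.degree v := by
  obtain ⟨a, b, c, d, h1, h2, h3, h4, h5, h6, hab, hcd, had, hbc, rfl⟩ := h
  rw [degree_eq_ncard, degree_eq_ncard]
  show ((SimpleGraph.fromEdgeSet (swSet G a b c d)).neighborSet v).ncard = (G.neighborSet v).ncard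
  by_cases hva : v = a
  · subst hva
    rw [switch_nbr_a h1 h2 h3 h4]
    exact ncard_insert_diff hab had
  by_cases hvb : v = b
  · subst hvb
    rw [← swSet_badc, switch_nbr_a h1.symm h5 h4 h3]
    exact ncard_insert_diff hab.symm (fun hc => hbc hc)
  by_cases hvc : v = c
  · subst hvc
    rw [← swSet_cdab, switch_nbr_a h6 h2.symm h4.symm h3.symm]
    exact ncard_insert_diff hcd (fun hc => hbc hc.symm)
  by_cases hvd : v = d
  · subst hvd
    rw [← swSet_dcba, switch_nbr_a h6.symm h5.symm h3.symm h4.symm]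
    exact ncard_insert_diff hcd.symm (fun hc => had hc.symm)
  · rw [switch_nbr_other h3 h4 hva hvb hvc hvd]

lemma twoSwitch_support_subset {G G' : SimpleGraph V} (h : TwoSwitch G G') :
    G'.support ⊆ G.support := by
  obtain ⟨a, b, c, d, h1, h2, h3, h4, h5, h6, hab, hcd, had, hbc, rfl⟩ := h
  intro x hx
  rw [SimpleGraph.mem_support] at hx
  obtain ⟨y, hxy⟩ := hx
  rw [show ((SimpleGraph.fromEdgeSet
      ((G.edgeSet \ {s(a, b), s(c, d)}) ∪ {s(a, d), s(b, c)}))).Adj x y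
      ↔ _ from switch_adj h3 h4 x y] at hxy
  rcases hxy with ⟨hadj, -, -⟩ | he | he
  · exact ⟨y, hadj⟩
  · rw [Sym2.eq_iff] at he
    rcases he with ⟨rfl, -⟩ | ⟨rfl, -⟩
    · exact ⟨b, hab⟩
    · exact ⟨c, hcd.symm⟩
  · rw [Sym2.eq_iff] at he
    rcases he with ⟨rfl, -⟩ | ⟨rfl, -⟩
    · exact ⟨a, hab.symm⟩
    · exact ⟨d, hcd⟩

lemma edgeSet_sw {G : SimpleGraph V} {a b c d : V}
    (h3 : a ≠ d) (h4 : b ≠ c) :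
    (SimpleGraph.fromEdgeSet (swSet G a b c d)).edgeSet = swSet G a b c d := by
  rw [SimpleGraph.edgeSet_fromEdgeSet]
  ext e
  simp only [Set.mem_diff, Set.mem_setOf_eq, and_iff_left_iff_imp]
  intro hmem hdiag
  rcases hmem with ⟨he, -⟩ | he
  · exact (SimpleGraph.not_isDiag_of_mem_edgeSet G he) hdiag
  · rcases he with rfl | rfl
    · exact h3 (Sym2.mk_isDiag_iff.mp hdiag)
    · exact h4 (Sym2.mk_isDiag_iff.mp hdiag)

lemma twoSwitch_symm {G G' : SimpleGraph V} (h : TwoSwitch G G') : TwoSwitch G' G := by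
  obtain ⟨a, b, c, d, h1, h2, h3, h4, h5, h6, hab, hcd, had, hbc, rfl⟩ := h
  show TwoSwitch (SimpleGraph.fromEdgeSet (swSet G a b c d)) G
  refine ⟨a, d, c, b, h3, h2, h1, h6.symm, h5.symm, h4.symm, ?_, ?_, ?_, ?_, ?_⟩
  · rw [switch_adj h3 h4]
    exact Or.inr (Or.inl rfl)
  · rw [switch_adj h3 h4]
    exact Or.inr (Or.inr Sym2.eq_swap)
  · rw [switch_adj h3 h4]
    rintro (⟨-, hne, -⟩ | he | he)
    · exact hne rfl
    · rw [Sym2.eq_iff] at he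
      rcases he with ⟨-, h7⟩ | ⟨h7, -⟩ <;> simp_all
    · rw [Sym2.eq_iff] at he
      rcases he with ⟨h7, -⟩ | ⟨h7, -⟩ <;> simp_all
  · rw [switch_adj h3 h4]
    rintro (⟨-, -, hne2⟩ | he | he)
    · exact hne2 Sym2.eq_swap
    · rw [Sym2.eq_iff] at he
      rcases he with ⟨h7, -⟩ | ⟨-, h7⟩ <;> simp_all
    · rw [Sym2.eq_iff] at he
      rcases he with ⟨h7, -⟩ | ⟨h7, -⟩ <;> simp_all
  · rw [edgeSet_sw h3 h4]
    have hset : (swSet G a b c d \ {s(a, d), s(c, b)}) ∪ {s(a, b), s(d, c)} = G.edgeSet := by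
      rw [show s(c,b) = s(b,c) from Sym2.eq_swap, show s(d,c) = s(c,d) from Sym2.eq_swap, swSet]
      ext e
      simp only [Set.mem_union, Set.mem_diff, Set.mem_insert_iff, Set.mem_singleton_iff]
      constructor
      · rintro (⟨⟨hE, -⟩ | (rfl | rfl), hQ⟩ | (rfl | rfl))
        · exact hE
        · exact absurd (Or.inl rfl) hQ
        · exact absurd (Or.inr rfl) hQ
        · exact (SimpleGraph.mem_edgeSet G).mpr hab
        · exact (SimpleGraph.mem_edgeSet G).mpr hcd
      · intro hE
        by_cases hP : e = s(a, b) ∨ e = s(c, d)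
        · exact Or.inr hP
        · refine Or.inl ⟨Or.inl ⟨hE, hP⟩, ?_⟩
          rintro (rfl | rfl)
          · exact had ((SimpleGraph.mem_edgeSet G).mp hE)
          · exact hbc ((SimpleGraph.mem_edgeSet G).mp hE)
    rw [hset, SimpleGraph.fromEdgeSet_edgeSet]

lemma rtg_symm {G G' : SimpleGraph V} (h : Relation.ReflTransGen TwoSwitch G G') :
    Relation.ReflTransGen TwoSwitch G' G :=
  by
    haveI : Std.Symm (TwoSwitch (V := V)) := ⟨fun _ _ hh => twoSwitch_symm hh⟩
    exact Std.Symm.symm _ _ h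

lemma rtg_support {G G' : SimpleGraph V} (h : Relation.ReflTransGen TwoSwitch G G') :
    G'.support ⊆ G.support := by
  induction h with
  | refl => exact subset_rfl
  | tail _ hstep ih => exact (twoSwitch_support_subset hstep).trans ih

lemma rtg_degree [Fintype V] {G G' : SimpleGraph V}
    (h : Relation.ReflTransGen TwoSwitch G G') (v : V) : G'.degree v = G.degree v := by
  induction h with
  | refl => rfl
  | tail _ hstep ih => exact (twoSwitch_degree_eq hstep v).trans ih

lemma exists_good_z [Fintype V] {G : SimpleGraph V} {w x y : V}
    (hwy : G.Adj w y) (hwx : ¬ G.Adj w x) (hxw : x ≠ w)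
    (hdeg : G.degree y ≤ G.degree x) :
    ∃ z, G.Adj x z ∧ ¬ G.Adj y z ∧ z ≠ y := by
  by_contra hcon
  push_neg at hcon
  -- hcon : ∀ z, G.Adj x z → ¬ G.Adj y z → z = y
  have hSsub : insert w (G.neighborSet x \ {y}) ⊆ G.neighborSet y := by
    rintro z (rfl | ⟨hz, hzy⟩)
    · exact hwy.symm
    · by_contra hyz
      exact hzy (Set.mem_singleton_iff.mpr (hcon z hz (fun hc => hyz hc)))
  have hwS : w ∉ G.neighborSet x \ {y} := fun hc => hwx (hc.1.symm)
  have hcardS : (insert w (G.neighborSet x \ {y})).ncard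
      = (G.neighborSet x \ {y}).ncard + 1 :=
    Set.ncard_insert_of_notMem hwS (Set.toFinite _)
  by_cases hyx : y ∈ G.neighborSet x
  · have h1 : (G.neighborSet x \ {y}).ncard + 1 = (G.neighborSet x).ncard :=
      Set.ncard_diff_singleton_add_one hyx (Set.toFinite _)
    have hcard2 : (G.neighborSet y).ncard ≤ (insert w (G.neighborSet x \ {y})).ncard := by
      rw [hcardS, h1, ← degree_eq_ncard, ← degree_eq_ncard]
      exact hdeg
    have hSeq : insert w (G.neighborSet x \ {y}) = G.neighborSet y :=
      Set.eq_of_subset_of_ncard_le hSsub hcard2 (Set.toFinite _)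
    have hxmem : x ∈ G.neighborSet y := (SimpleGraph.mem_neighborSet _ _ _).mpr ((SimpleGraph.mem_neighborSet _ _ _).mp hyx).symm
    rw [← hSeq] at hxmem
    rcases hxmem with rfl | ⟨hc, -⟩
    · exact hxw rfl
    · exact G.irrefl hc
  · have h1 : G.neighborSet x \ {y} = G.neighborSet x := by
      apply Set.diff_singleton_eq_self
      exact hyx
    have hle : (insert w (G.neighborSet x \ {y})).ncard ≤ (G.neighborSet y).ncard :=
      Set.ncard_le_ncard hSsub (Set.toFinite _)
    rw [hcardS, h1, ← degree_eq_ncard, ← degree_eq_ncard] at hle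
    omega

lemma hh_step [Fintype V] {G : SimpleGraph V} {w x y : V}
    (hwy : G.Adj w y) (hwx : ¬ G.Adj w x) (hxw : x ≠ w)
    (hdeg : G.degree y ≤ G.degree x) :
    ∃ G₁ : SimpleGraph V, TwoSwitch G G₁ ∧
      G₁.neighborSet w = insert x (G.neighborSet w \ {y}) := by
  obtain ⟨z, hxz, hyz, hzy⟩ := exists_good_z hwy hwx hxw hdeg
  have hwz : w ≠ z := fun hc => hwx (hc ▸ hxz.symm)
  have hyxne : y ≠ x := by rintro rfl; exact hwx hwy
  exact ⟨_, twoSwitch_mk hwy.ne hwz (Ne.symm hxw) (Ne.symm hzy) hyxne hxz.ne' hwy hxz.symm hwx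
      hyz,
    switch_nbr_a hwy.ne hwz (Ne.symm hxw) (Ne.symm hzy)⟩

lemma measure_drop [Finite V] {N M : Set V} {x y : V}
    (hyN : y ∈ N) (hyM : y ∉ M) (hxM : x ∈ M) (hxN : x ∉ N) :
    ((insert x (N \ {y})) \ M).ncard + (M \ (insert x (N \ {y}))).ncard
      < (N \ M).ncard + (M \ N).ncard := by
  have h1 : (insert x (N \ {y})) \ M = (N \ M) \ {y} := by
    ext v
    simp only [Set.mem_diff, Set.mem_insert_iff, Set.mem_singleton_iff]
    constructor
    · rintro ⟨rfl | ⟨hvN, hvy⟩, hvM⟩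
      · exact absurd hxM hvM
      · exact ⟨⟨hvN, hvM⟩, hvy⟩
    · rintro ⟨⟨hvN, hvM⟩, hvy⟩
      exact ⟨Or.inr ⟨hvN, hvy⟩, hvM⟩
  have h2 : M \ (insert x (N \ {y})) = (M \ N) \ {x} := by
    ext v
    simp only [Set.mem_diff, Set.mem_insert_iff, Set.mem_singleton_iff, not_or, not_and,
      not_not]
    constructor
    · rintro ⟨hvM, hvx, hvN⟩
      refine ⟨⟨hvM, fun hN => ?_⟩, hvx⟩
      have := hvN hN
      subst this
      exact hyM hvM
    · rintro ⟨⟨hvM, hvN⟩, hvx⟩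
      exact ⟨hvM, hvx, fun hN => absurd hN hvN⟩
  rw [h1, h2]
  have d1 := Set.ncard_diff_singleton_lt_of_mem (show y ∈ N \ M from ⟨hyN, hyM⟩) (Set.toFinite _)
  have d2 := Set.ncard_diff_singleton_lt_of_mem (show x ∈ M \ N from ⟨hxM, hxN⟩) (Set.toFinite _)
  omega

lemma diff_nonempty_of_ne [Finite V] {N M : Set V} (hcard : N.ncard = M.ncard) (hne : N ≠ M) :
    (N \ M).Nonempty ∧ (M \ N).Nonempty := by
  constructor
  · rw [Set.nonempty_iff_ne_empty]
    intro hc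
    rw [Set.diff_eq_empty] at hc
    exact hne (Set.eq_of_subset_of_ncard_le hc hcard.ge (Set.toFinite _))
  · rw [Set.nonempty_iff_ne_empty]
    intro hc
    rw [Set.diff_eq_empty] at hc
    exact hne (Set.eq_of_subset_of_ncard_le hc hcard.le (Set.toFinite _)).symm

lemma equalize [Fintype V] (w : V) :
    ∀ n : ℕ, ∀ G H : SimpleGraph V,
      (∀ v, G.degree v = H.degree v) →
      (G.neighborSet w \ H.neighborSet w).ncard
        + (H.neighborSet w \ G.neighborSet w).ncard = n →
      ∃ G₁ H₁ : SimpleGraph V, Relation.ReflTransGen TwoSwitch G G₁ ∧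
        Relation.ReflTransGen TwoSwitch H H₁ ∧ G₁.neighborSet w = H₁.neighborSet w := by
  intro n
  induction n using Nat.strong_induction_on with
  | _ n ih =>
    intro G H hdeg hn
    by_cases heq : G.neighborSet w = H.neighborSet w
    · exact ⟨G, H, Relation.ReflTransGen.refl, Relation.ReflTransGen.refl, heq⟩
    · have hcard : (G.neighborSet w).ncard = (H.neighborSet w).ncard := by
        rw [← degree_eq_ncard, ← degree_eq_ncard, hdeg]
      obtain ⟨⟨y, hy⟩, ⟨x, hx⟩⟩ := diff_nonempty_of_ne hcard heq
      have hyG : G.Adj w y := hy.1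
      have hyH : ¬ H.Adj w y := hy.2
      have hxH : H.Adj w x := hx.1
      have hxG : ¬ G.Adj w x := hx.2
      rcases le_total (G.degree y) (G.degree x) with hle | hle
      · obtain ⟨G₁, hsw, hN⟩ := hh_step hyG hxG hxH.ne' hle
        have hdrop := measure_drop hy.1 hy.2 hx.1 hx.2
        rw [← hN] at hdrop
        have hdeg1 : ∀ v, G₁.degree v = H.degree v :=
          fun v => (twoSwitch_degree_eq hsw v).trans (hdeg v)
        obtain ⟨G₂, H₂, r1, r2, hNN⟩ := ih _ (hn ▸ hdrop) G₁ H hdeg1 rfl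
        exact ⟨G₂, H₂, Relation.ReflTransGen.trans (Relation.ReflTransGen.single hsw) r1,
          r2, hNN⟩
      · have hle' : H.degree x ≤ H.degree y := by rw [← hdeg, ← hdeg]; exact hle
        obtain ⟨H₁, hsw, hN⟩ := hh_step hxH hyH hyG.ne' hle'
        have hdrop := measure_drop hx.1 hx.2 hy.1 hy.2
        rw [← hN] at hdrop
        have hdeg1 : ∀ v, G.degree v = H₁.degree v :=
          fun v => (hdeg v).trans (twoSwitch_degree_eq hsw v).symm
        have hn' : (G.neighborSet w \ H₁.neighborSet w).ncard
            + (H₁.neighborSet w \ G.neighborSet w).ncard < n := by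
          omega
        obtain ⟨G₂, H₂, r1, r2, hNN⟩ := ih _ hn' G H₁ hdeg1 rfl
        exact ⟨G₂, H₂, r1, Relation.ReflTransGen.trans (Relation.ReflTransGen.single hsw) r2,
          hNN⟩

lemma K_adj {G : SimpleGraph V} {w u v : V} :
    (SimpleGraph.fromEdgeSet (G.edgeSet \ {e | w ∈ e})).Adj u v
      ↔ G.Adj u v ∧ u ≠ w ∧ v ≠ w := by
  rw [SimpleGraph.fromEdgeSet_adj]
  simp only [Set.mem_diff, SimpleGraph.mem_edgeSet, Set.mem_setOf_eq, Sym2.mem_iff, not_or]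
  constructor
  · rintro ⟨⟨hA, hwu, hwv⟩, -⟩
    exact ⟨hA, Ne.symm hwu, Ne.symm hwv⟩
  · rintro ⟨hA, hu, hv⟩
    exact ⟨⟨hA, Ne.symm hu, Ne.symm hv⟩, hA.ne⟩

lemma star_adj {G : SimpleGraph V} {w u v : V} :
    (SimpleGraph.fromEdgeSet (G.edgeSet ∩ {e | w ∈ e})).Adj u v
      ↔ G.Adj u v ∧ (w = u ∨ w = v) := by
  rw [SimpleGraph.fromEdgeSet_adj]
  simp only [Set.mem_inter_iff, SimpleGraph.mem_edgeSet, Set.mem_setOf_eq, Sym2.mem_iff]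
  constructor
  · rintro ⟨⟨hA, hw⟩, -⟩
    exact ⟨hA, hw⟩
  · rintro ⟨hA, hw⟩
    exact ⟨⟨hA, hw⟩, hA.ne⟩

lemma K_nbr {G : SimpleGraph V} {w v : V} (hvw : v ≠ w) :
    (SimpleGraph.fromEdgeSet (G.edgeSet \ {e | w ∈ e})).neighborSet v
      = G.neighborSet v \ {w} := by
  ext u
  simp only [SimpleGraph.mem_neighborSet, K_adj, Set.mem_diff, Set.mem_singleton_iff]
  tauto

lemma K_nbr_w {G : SimpleGraph V} {w : V} :
    (SimpleGraph.fromEdgeSet (G.edgeSet \ {e | w ∈ e})).neighborSet w = ∅ := by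
  ext u
  simp only [SimpleGraph.mem_neighborSet, K_adj, Set.mem_empty_iff_false, iff_false]
  rintro ⟨-, hc, -⟩
  exact hc rfl

lemma K_degree_eq [Fintype V] {G₁ H₁ : SimpleGraph V} {w : V}
    (hdeg : ∀ v, G₁.degree v = H₁.degree v)
    (hNw : G₁.neighborSet w = H₁.neighborSet w) (v : V) :
    (SimpleGraph.fromEdgeSet (G₁.edgeSet \ {e | w ∈ e})).degree v
      = (SimpleGraph.fromEdgeSet (H₁.edgeSet \ {e | w ∈ e})).degree v := by
  have hmemiff : w ∈ G₁.neighborSet v ↔ w ∈ H₁.neighborSet v := by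
    constructor
    · intro hmem
      have h1 : v ∈ G₁.neighborSet w := ((G₁.mem_neighborSet v w).mp hmem).symm
      rw [hNw] at h1
      exact ((H₁.mem_neighborSet w v).mp h1).symm
    · intro hmem
      have h1 : v ∈ H₁.neighborSet w := ((H₁.mem_neighborSet v w).mp hmem).symm
      rw [← hNw] at h1
      exact ((G₁.mem_neighborSet w v).mp h1).symm
  by_cases hvw : v = w
  · subst hvw
    rw [degree_eq_ncard', degree_eq_ncard', K_nbr_w, K_nbr_w]
  · rw [degree_eq_ncard', degree_eq_ncard', K_nbr hvw, K_nbr hvw]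
    have hd := hdeg v
    rw [degree_eq_ncard, degree_eq_ncard] at hd
    by_cases hwmem : w ∈ G₁.neighborSet v
    · have hwmem' : w ∈ H₁.neighborSet v := hmemiff.mp hwmem
      have e1 := Set.ncard_diff_singleton_add_one hwmem (Set.toFinite _)
      have e2 := Set.ncard_diff_singleton_add_one hwmem' (Set.toFinite _)
      omega
    · have hwmem' : w ∉ H₁.neighborSet v := fun hc => hwmem (hmemiff.mpr hc)
      rw [Set.diff_singleton_eq_self hwmem, Set.diff_singleton_eq_self hwmem', hd]

lemma star_set_eq {G₁ H₁ : SimpleGraph V} {w : V}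
    (hNw : G₁.neighborSet w = H₁.neighborSet w) :
    G₁.edgeSet ∩ {e | w ∈ e} = H₁.edgeSet ∩ {e | w ∈ e} := by
  have hAdjw : ∀ v, G₁.Adj w v ↔ H₁.Adj w v := by
    intro v
    rw [← SimpleGraph.mem_neighborSet, ← SimpleGraph.mem_neighborSet, hNw]
  ext e
  induction e with
  | _ u v =>
    simp only [Set.mem_inter_iff, SimpleGraph.mem_edgeSet, Set.mem_setOf_eq, Sym2.mem_iff]
    constructor
    · rintro ⟨hA, (rfl | rfl)⟩
      · exact ⟨(hAdjw v).mp hA, Or.inl rfl⟩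
      · exact ⟨((hAdjw u).mp hA.symm).symm, Or.inr rfl⟩
    · rintro ⟨hA, (rfl | rfl)⟩
      · exact ⟨(hAdjw v).mpr hA, Or.inl rfl⟩
      · exact ⟨((hAdjw u).mpr hA.symm).symm, Or.inr rfl⟩

lemma split_graph (G₁ : SimpleGraph V) (w : V) :
    G₁ = SimpleGraph.fromEdgeSet (G₁.edgeSet \ {e | w ∈ e})
        ⊔ SimpleGraph.fromEdgeSet (G₁.edgeSet ∩ {e | w ∈ e}) := by
  rw [← SimpleGraph.fromEdgeSet_union, Set.diff_union_inter, SimpleGraph.fromEdgeSet_edgeSet]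

lemma lift_switch {P Q star : SimpleGraph V} {w : V}
    (hstar : ∀ u v, star.Adj u v → w = u ∨ w = v)
    (hP : w ∉ P.support) (h : TwoSwitch P Q) : TwoSwitch (P ⊔ star) (Q ⊔ star) := by
  obtain ⟨a, b, c, d, h1, h2, h3, h4, h5, h6, hab, hcd, had, hbc, rfl⟩ := h
  have haw : a ≠ w := fun hc => hP ((SimpleGraph.mem_support _).mpr ⟨b, hc ▸ hab⟩)
  have hbw : b ≠ w := fun hc => hP ((SimpleGraph.mem_support _).mpr ⟨a, hc ▸ hab.symm⟩)
  have hcw : c ≠ w := fun hc => hP ((SimpleGraph.mem_support _).mpr ⟨d, hc ▸ hcd⟩)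
  have hdw : d ≠ w := fun hc => hP ((SimpleGraph.mem_support _).mpr ⟨c, hc ▸ hcd.symm⟩)
  refine ⟨a, b, c, d, h1, h2, h3, h4, h5, h6, ?_, ?_, ?_, ?_, ?_⟩
  · exact (SimpleGraph.sup_adj _ _ _ _).mpr (Or.inl hab)
  · exact (SimpleGraph.sup_adj _ _ _ _).mpr (Or.inl hcd)
  · intro hc
    rcases (SimpleGraph.sup_adj _ _ _ _).mp hc with hc | hc
    · exact had hc
    · rcases hstar _ _ hc with rfl | rfl
      · exact haw rfl
      · exact hdw rfl
  · intro hc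
    rcases (SimpleGraph.sup_adj _ _ _ _).mp hc with hc | hc
    · exact hbc hc
    · rcases hstar _ _ hc with rfl | rfl
      · exact hbw rfl
      · exact hcw rfl
  · have hset : (((P ⊔ star).edgeSet) \ {s(a,b), s(c,d)}) ∪ {s(a,d), s(b,c)}
        = ((P.edgeSet \ {s(a,b), s(c,d)}) ∪ {s(a,d), s(b,c)}) ∪ star.edgeSet := by
      rw [SimpleGraph.edgeSet_sup]
      ext e
      simp only [Set.mem_union, Set.mem_diff]
      constructor
      · rintro (⟨hEP | hES, hT⟩ | hA)
        · exact Or.inl (Or.inl ⟨hEP, hT⟩)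
        · exact Or.inr hES
        · exact Or.inl (Or.inr hA)
      · rintro ((⟨hEP, hT⟩ | hA) | hES)
        · exact Or.inl ⟨Or.inl hEP, hT⟩
        · exact Or.inr hA
        · refine Or.inl ⟨Or.inr hES, ?_⟩
          rintro (rfl | rfl)
          · rcases hstar _ _ ((SimpleGraph.mem_edgeSet star).mp hES) with rfl | rfl
            · exact haw rfl
            · exact hbw rfl
          · rcases hstar _ _ ((SimpleGraph.mem_edgeSet star).mp hES) with rfl | rfl
            · exact hcw rfl
            · exact hdw rfl
    rw [hset, SimpleGraph.fromEdgeSet_union _ star.edgeSet, SimpleGraph.fromEdgeSet_edgeSet star]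

lemma lift_rtg {K K' star : SimpleGraph V} {w : V}
    (hstar : ∀ u v, star.Adj u v → w = u ∨ w = v)
    (hK : w ∉ K.support) (h : Relation.ReflTransGen TwoSwitch K K') :
    Relation.ReflTransGen TwoSwitch (K ⊔ star) (K' ⊔ star) := by
  induction h with
  | refl => exact Relation.ReflTransGen.refl
  | @tail X Y hKX hXY ih =>
      have hX : w ∉ X.support := fun hc => hK (rtg_support hKX hc)
      exact ih.tail (lift_switch hstar hX hXY)

lemma main [Fintype V] : ∀ n : ℕ, ∀ A : Finset V, A.card = n →
    ∀ G H : SimpleGraph V, (∀ v, G.degree v = H.degree v) →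
      G.support ⊆ ↑A → H.support ⊆ ↑A → Relation.ReflTransGen TwoSwitch G H := by
  intro n
  induction n using Nat.strong_induction_on with
  | _ n ih =>
    intro A hA G H hdeg hGs hHs
    rcases A.eq_empty_or_nonempty with rfl | ⟨w, hw⟩
    · have hG : G = ⊥ := by
        ext u v
        simp only [SimpleGraph.bot_adj, iff_false]
        intro hadj
        simpa using hGs ((SimpleGraph.mem_support _).mpr ⟨v, hadj⟩)
      have hH : H = ⊥ := by
        ext u v
        simp only [SimpleGraph.bot_adj, iff_false]
        intro hadj
        simpa using hHs ((SimpleGraph.mem_support _).mpr ⟨v, hadj⟩)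
      rw [hG, hH]
    · obtain ⟨G₁, H₁, r1, r2, hNw⟩ := equalize w _ G H hdeg rfl
      have hdeg1 : ∀ v, G₁.degree v = H₁.degree v := fun v => by
        rw [rtg_degree r1 v, rtg_degree r2 v]; exact hdeg v
      have hG1s : G₁.support ⊆ ↑A := (rtg_support r1).trans hGs
      have hH1s : H₁.support ⊆ ↑A := (rtg_support r2).trans hHs
      have hKdeg := K_degree_eq hdeg1 hNw
      have hstar_adj : ∀ u v,
          (SimpleGraph.fromEdgeSet (G₁.edgeSet ∩ {e | w ∈ e})).Adj u v → w = u ∨ w = v :=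
        fun u v hadj => (star_adj.mp hadj).2
      have hKs : (SimpleGraph.fromEdgeSet (G₁.edgeSet \ {e | w ∈ e})).support
          ⊆ ↑(A.erase w) := by
        intro u hu
        obtain ⟨v, hadj⟩ := (SimpleGraph.mem_support _).mp hu
        rw [K_adj] at hadj
        rw [Finset.coe_erase]
        exact ⟨hG1s ((SimpleGraph.mem_support _).mpr ⟨v, hadj.1⟩),
          fun hc => hadj.2.1 hc⟩
      have hK's : (SimpleGraph.fromEdgeSet (H₁.edgeSet \ {e | w ∈ e})).support
          ⊆ ↑(A.erase w) := by
        intro u hu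
        obtain ⟨v, hadj⟩ := (SimpleGraph.mem_support _).mp hu
        rw [K_adj] at hadj
        rw [Finset.coe_erase]
        exact ⟨hH1s ((SimpleGraph.mem_support _).mpr ⟨v, hadj.1⟩),
          fun hc => hadj.2.1 hc⟩
      have hKw : w ∉ (SimpleGraph.fromEdgeSet (G₁.edgeSet \ {e | w ∈ e})).support := by
        intro hc
        obtain ⟨v, hadj⟩ := (SimpleGraph.mem_support _).mp hc
        rw [K_adj] at hadj
        exact hadj.2.1 rfl
      have hrec := ih ((A.erase w).card)
        (by rw [← hA]; exact Finset.card_erase_lt_of_mem hw) (A.erase w) rfl _ _ (fun v => by convert hKdeg v) hKs hK's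
      have hlift := lift_rtg hstar_adj hKw hrec
      have e1 : G₁ = SimpleGraph.fromEdgeSet (G₁.edgeSet \ {e | w ∈ e})
          ⊔ SimpleGraph.fromEdgeSet (G₁.edgeSet ∩ {e | w ∈ e}) := split_graph G₁ w
      have e2 : H₁ = SimpleGraph.fromEdgeSet (H₁.edgeSet \ {e | w ∈ e})
          ⊔ SimpleGraph.fromEdgeSet (G₁.edgeSet ∩ {e | w ∈ e}) := by
        rw [star_set_eq hNw]
        exact split_graph H₁ w
      have hmid : Relation.ReflTransGen TwoSwitch G₁ H₁ := by
        rw [e1, e2]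
        exact hlift
      exact (r1.trans hmid).trans (rtg_symm r2)

end TwoSwitchAux

/- STATEMENT 11: If the degree sequence of a finite simple graph `G` admits a
connected realization, then some finite sequence of two-switches transforms
`G` into a connected simple graph with the same degree sequence. -/
open scoped Classical in
theorem stmt_11 {V : Type*} [Fintype V] (G : SimpleGraph V)
    (h : ∃ G'' : SimpleGraph V, G''.Connected ∧ ∀ v : V, G''.degree v = G.degree v) :
    ∃ G' : SimpleGraph V, Relation.ReflTransGen TwoSwitch G G' ∧
      G'.Connected ∧ ∀ v : V, G'.degree v = G.degree v := by
  obtain ⟨H, hconn, hdeg⟩ := h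
  refine ⟨H, ?_, hconn, hdeg⟩
  exact TwoSwitchAux.main (Finset.univ : Finset V).card Finset.univ rfl G H
    (fun v => (hdeg v).symm) (by simp) (by simp)
end

section
/- Let (a_1, …, a_n) be a graphic sequence of positive integers (a_i ≥ 1 for all i, n ≥ 1). Then (a_1, …, a_n) is realizable as the degree sequence of a connected simple graph if and only if Σ_{i=1}^{n} a_i ≥ 2(n − 1). -/
/- STATEMENT 12: A graphic sequence `(a_1, …, a_n)` of positive integers
(`n ≥ 1`) is realizable as the degree sequence of a connected simple graph if
and only if `Σ_{i=1}^n a_i ≥ 2(n - 1)`. -/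

open SimpleGraph

open scoped Classical

noncomputable instance myCCFintype {V : Type*} [Fintype V] (G : SimpleGraph V) :
    Fintype G.ConnectedComponent :=
  @Quotient.fintype V _ G.reachableSetoid (Classical.decRel _)

lemma reach_split {V : Type*} {G : SimpleGraph V} {x y a b : V}
    (p : G.Walk a b) :
    (G.deleteEdges {s(x,y)}).Reachable a b ∨
      ((G.deleteEdges {s(x,y)}).Reachable a x ∨ (G.deleteEdges {s(x,y)}).Reachable a y) := by
  induction p with
  | nil => exact Or.inl (Reachable.refl _)
  | @cons a c b hadj p ih =>
    by_cases he : s(a, c) = s(x, y)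
    · rw [Sym2.eq_iff] at he
      rcases he with ⟨rfl, rfl⟩ | ⟨rfl, rfl⟩
      · exact Or.inr (Or.inl (Reachable.refl _))
      · exact Or.inr (Or.inr (Reachable.refl _))
    · have hadj' : (G.deleteEdges {s(x,y)}).Adj a c := by
        simp only [deleteEdges_adj, Set.mem_singleton_iff]
        exact ⟨hadj, he⟩
      rcases ih with h | h
      · exact Or.inl (hadj'.reachable.trans h)
      · exact Or.inr (h.imp hadj'.reachable.trans hadj'.reachable.trans)

lemma card_cc_deleteEdge_le {V : Type*} [Fintype V] (G : SimpleGraph V) (x y : V) :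
    Fintype.card (G.deleteEdges {s(x,y)}).ConnectedComponent ≤
      Fintype.card G.ConnectedComponent + 1 := by
  set G' := G.deleteEdges {s(x,y)} with hG'
  have hle : G' ≤ G := deleteEdges_le _
  let f : G'.ConnectedComponent → G.ConnectedComponent :=
    ConnectedComponent.lift (fun v => G.connectedComponentMk v)
      (fun v w p _ => ConnectedComponent.sound ((p.reachable).mono hle))
  have key : ∀ v w : V, G.Reachable v w →
      G'.connectedComponentMk v = G'.connectedComponentMk w ∨
        ((G'.Reachable v x ∨ G'.Reachable v y) ∧ (G'.Reachable w x ∨ G'.Reachable w y)) := by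
    intro v w hr
    obtain ⟨p⟩ := hr
    rcases reach_split (x := x) (y := y) p with h | h
    · exact Or.inl (ConnectedComponent.sound h)
    · rcases reach_split (x := x) (y := y) p.reverse with h' | h'
      · exact Or.inl (ConnectedComponent.sound h'.symm)
      · exact Or.inr ⟨h, h'⟩
  let g : G'.ConnectedComponent → Option G.ConnectedComponent :=
    fun c => if c = G'.connectedComponentMk y then none else some (f c)
  have hginj : Function.Injective g := by
    intro c₁ c₂ hg
    obtain ⟨v, rfl⟩ : ∃ v, G'.connectedComponentMk v = c₁ := Quot.exists_rep c₁
    obtain ⟨w, rfl⟩ : ∃ w, G'.connectedComponentMk w = c₂ := Quot.exists_rep c₂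
    simp only [g] at hg
    by_cases h1 : G'.connectedComponentMk v = G'.connectedComponentMk y <;>
      by_cases h2 : G'.connectedComponentMk w = G'.connectedComponentMk y
    · rw [h1, h2]
    · rw [if_pos h1, if_neg h2] at hg; exact absurd hg (by simp)
    · rw [if_neg h1, if_pos h2] at hg; exact absurd hg (by simp)
    · rw [if_neg h1, if_neg h2] at hg
      have hf : f (G'.connectedComponentMk v) = f (G'.connectedComponentMk w) :=
        Option.some_injective _ hg
      simp only [f, ConnectedComponent.lift_mk] at hf
      have hr : G.Reachable v w := ConnectedComponent.eq.mp hf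
      rcases key v w hr with h | ⟨hv, hw⟩
      · exact h
      · have hv' : G'.connectedComponentMk v = G'.connectedComponentMk x := by
          rcases hv with h | h
          · exact ConnectedComponent.sound h
          · exact absurd (ConnectedComponent.sound h) h1
        have hw' : G'.connectedComponentMk w = G'.connectedComponentMk x := by
          rcases hw with h | h
          · exact ConnectedComponent.sound h
          · exact absurd (ConnectedComponent.sound h) h2
        exact hv'.trans hw'.symm
  calc Fintype.card G'.ConnectedComponent
      ≤ Fintype.card (Option G.ConnectedComponent) := Fintype.card_le_of_injective g hginj
    _ = Fintype.card G.ConnectedComponent + 1 := Fintype.card_option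

lemma card_cc_bot {V : Type*} [Fintype V] {G : SimpleGraph V} (h : G = ⊥) :
    Fintype.card G.ConnectedComponent = Fintype.card V := by
  subst h
  refine (Fintype.card_of_bijective (f := (⊥ : SimpleGraph V).connectedComponentMk) ⟨?_, ?_⟩).symm
  · intro v w hvw
    exact (reachable_bot).mp (ConnectedComponent.eq.mp hvw)
  · intro c
    obtain ⟨v, rfl⟩ := Quot.exists_rep c
    exact ⟨v, rfl⟩

lemma edgeFinset_deleteEdge {V : Type*} [Fintype V] (G : SimpleGraph V) {x y : V}
    (hxy : G.Adj x y) :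
    (G.deleteEdges {s(x,y)}).edgeFinset = G.edgeFinset.erase s(x,y) := by
  ext e
  simp [edgeSet_deleteEdges, and_comm]

lemma card_V_le {V : Type*} [Fintype V] (G : SimpleGraph V) :
    Fintype.card V ≤ G.edgeFinset.card + Fintype.card G.ConnectedComponent := by
  suffices H : ∀ k (G : SimpleGraph V), G.edgeFinset.card = k →
      Fintype.card V ≤ G.edgeFinset.card + Fintype.card G.ConnectedComponent from H _ G rfl
  intro k
  induction k using Nat.strong_induction_on with
  | _ k ih =>
    intro G hk
    rcases Finset.eq_empty_or_nonempty G.edgeFinset with h0 | ⟨e, he⟩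
    · rw [card_cc_bot (edgeFinset_eq_empty.mp h0)]
      omega
    · induction e with
      | h x y =>
        have hxy : G.Adj x y := by rwa [mem_edgeFinset, mem_edgeSet] at he
        have hcard : (G.deleteEdges {s(x,y)}).edgeFinset.card = k - 1 := by
          rw [edgeFinset_deleteEdge G hxy, Finset.card_erase_of_mem he, hk]
        have hkpos : 1 ≤ k := by
          rw [← hk]; exact Finset.card_pos.mpr ⟨_, he⟩
        have h1 : Fintype.card V ≤ (k - 1) +
            Fintype.card (G.deleteEdges {s(x,y)}).ConnectedComponent := by
          have := ih (k - 1) (by omega) (G.deleteEdges {s(x,y)}) (by convert hcard)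
          convert this using 2
          convert hcard.symm
        have h2 := card_cc_deleteEdge_le G x y
        omega

lemma acyclic_card {V : Type*} [Fintype V] (G : SimpleGraph V) (hG : G.IsAcyclic) :
    G.edgeFinset.card + Fintype.card G.ConnectedComponent ≤ Fintype.card V := by
  suffices H : ∀ k (G : SimpleGraph V), G.IsAcyclic → G.edgeFinset.card = k →
      G.edgeFinset.card + Fintype.card G.ConnectedComponent ≤ Fintype.card V from
    H _ G hG rfl
  clear hG
  intro k
  induction k using Nat.strong_induction_on with
  | _ k ih =>
    intro G hG hk
    rcases Finset.eq_empty_or_nonempty G.edgeFinset with h0 | ⟨e, he⟩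
    · rw [card_cc_bot (edgeFinset_eq_empty.mp h0), h0]
      simp
    · induction e with
      | h x y =>
        have hxy : G.Adj x y := by rwa [mem_edgeFinset, mem_edgeSet] at he
        set G' := G.deleteEdges {s(x,y)} with hG'def
        have hle : G' ≤ G := deleteEdges_le _
        have hacy' : G'.IsAcyclic := fun _ c hc => hG (c.mapLe hle) (hc.mapLe hle)
        have hcard : G'.edgeFinset.card = k - 1 := by
          convert (show (G.deleteEdges {s(x,y)}).edgeFinset.card = k - 1 by
            rw [edgeFinset_deleteEdge G hxy, Finset.card_erase_of_mem he, hk])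
        have hkpos : 1 ≤ k := by
          rw [← hk]; exact Finset.card_pos.mpr ⟨_, he⟩
        -- the deleted edge is a bridge
        have hbr : ¬ G'.Reachable x y := by
          have := (isAcyclic_iff_forall_adj_isBridge.mp hG) hxy
          rw [isBridge_iff] at this
          exact this
        -- components strictly increase on deletion
        have hsur : Function.Surjective
            (ConnectedComponent.lift (β := G.ConnectedComponent)
              (fun v => G.connectedComponentMk v)
              (fun v w p _ => ConnectedComponent.sound ((p.reachable).mono hle)) :
              G'.ConnectedComponent → G.ConnectedComponent) := by
          intro c
          obtain ⟨v, rfl⟩ := Quot.exists_rep c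
          exact ⟨G'.connectedComponentMk v, rfl⟩
        have hninj : ¬ Function.Injective
            (ConnectedComponent.lift (β := G.ConnectedComponent)
              (fun v => G.connectedComponentMk v)
              (fun v w p _ => ConnectedComponent.sound ((p.reachable).mono hle)) :
              G'.ConnectedComponent → G.ConnectedComponent) := by
          intro hinj
          have : G'.connectedComponentMk x = G'.connectedComponentMk y := by
            apply hinj
            simp only [ConnectedComponent.lift_mk]
            exact ConnectedComponent.sound hxy.reachable
          exact hbr (ConnectedComponent.eq.mp this)
        have hlt : Fintype.card G.ConnectedComponent <
            Fintype.card G'.ConnectedComponent :=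
          Fintype.card_lt_of_surjective_not_injective _ hsur hninj
        have h1 : k - 1 + Fintype.card G'.ConnectedComponent ≤ Fintype.card V := by
          have := ih (k - 1) (by omega) G' hacy' (by convert hcard)
          convert this using 2
          convert hcard.symm
        omega

lemma degree_congr' {V : Type*} {H H' : SimpleGraph V} {p : V}
    (i1 : Fintype (H'.neighborSet p)) (i2 : Fintype (H.neighborSet p))
    (h : ∀ q, H'.Adj p q ↔ H.Adj p q) :
    @SimpleGraph.degree _ H' p i1 = @SimpleGraph.degree _ H p i2 := by
  have hnb : @neighborFinset _ H' p i1 = @neighborFinset _ H p i2 := by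
    ext q; simp [mem_neighborFinset, h]
  show (@neighborFinset _ H' p i1).card = (@neighborFinset _ H p i2).card
  rw [hnb]

lemma degree_swap' {V : Type*} [DecidableEq V] {H H' : SimpleGraph V} {p r s : V}
    (i1 : Fintype (H'.neighborSet p)) (i2 : Fintype (H.neighborSet p))
    (h1 : H.Adj p r) (h2 : ¬H.Adj p s)
    (h : ∀ q, H'.Adj p q ↔ (H.Adj p q ∧ q ≠ r) ∨ q = s) :
    @SimpleGraph.degree _ H' p i1 = @SimpleGraph.degree _ H p i2 := by
  have hnb : @neighborFinset _ H' p i1 = insert s ((@neighborFinset _ H p i2).erase r) := by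
    ext q
    simp only [mem_neighborFinset, h, Finset.mem_insert, Finset.mem_erase]
    tauto
  have hrmem : r ∈ @neighborFinset _ H p i2 := by simpa [mem_neighborFinset] using h1
  have hsnm : s ∉ (@neighborFinset _ H p i2).erase r := by
    intro hs
    exact h2 (by simpa [mem_neighborFinset] using (Finset.mem_of_mem_erase hs))
  show (@neighborFinset _ H' p i1).card = (@neighborFinset _ H p i2).card
  rw [hnb, Finset.card_insert_of_notMem hsnm, Finset.card_erase_of_mem hrmem]
  have : 0 < (@neighborFinset _ H p i2).card := Finset.card_pos.mpr ⟨r, hrmem⟩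
  omega

lemma reach_of_adj_reach {V : Type*} {G H : SimpleGraph V}
    (h : ∀ p q, G.Adj p q → H.Reachable p q) {v w : V} (hr : G.Reachable v w) :
    H.Reachable v w := by
  obtain ⟨p⟩ := hr
  induction p with
  | nil => exact Reachable.refl _
  | cons hadj _ ih => exact (h _ _ hadj).trans ih

lemma reachable_of_mem_support {V : Type*} {G : SimpleGraph V} {a b c : V}
    (p : G.Walk a b) (hc : c ∈ p.support) : G.Reachable a c := by
  induction p with
  | nil => simp at hc; subst hc; exact Reachable.refl _
  | cons hadj p ih =>
    rcases Walk.mem_support_iff _ |>.mp hc with rfl | hc'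
    · exact Reachable.refl _
    · exact hadj.reachable.trans (ih hc')

open scoped Classical in
theorem stmt_12 {n : ℕ} (hn : 1 ≤ n) (a : Fin n → ℕ) (ha : ∀ i, 1 ≤ a i)
    (hgraphic : ∃ G : SimpleGraph (Fin n), ∀ i, G.degree i = a i) :
    (∃ G : SimpleGraph (Fin n), G.Connected ∧ ∀ i, G.degree i = a i) ↔
      2 * (n - 1) ≤ ∑ i, a i := by
  haveI : Nonempty (Fin n) := ⟨⟨0, hn⟩⟩
  constructor
  · rintro ⟨G, hconn, hdeg⟩
    have hsub : Subsingleton G.ConnectedComponent :=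
      hconn.preconnected.subsingleton_connectedComponent
    have h1 : Fintype.card G.ConnectedComponent = 1 :=
      Fintype.card_eq_one_iff.mpr
        ⟨G.connectedComponentMk ⟨0, hn⟩, fun c => Subsingleton.elim _ _⟩
    have h2 := card_V_le G
    rw [Fintype.card_fin, h1] at h2
    have h3 : ∑ i, a i = 2 * G.edgeFinset.card := by
      rw [← G.sum_degrees_eq_twice_card_edges]
      exact Finset.sum_congr rfl fun i _ => (hdeg i).symm
    omega
  · intro hsum
    set S : Set ℕ :=
      {m | ∃ G : SimpleGraph (Fin n),
        (∀ i, G.degree i = a i) ∧ Fintype.card G.ConnectedComponent = m} with hS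
    have hSne : S.Nonempty := hgraphic.elim fun G hG => ⟨_, G, hG, rfl⟩
    obtain ⟨G, hG, hGm⟩ := Nat.sInf_mem hSne
    refine ⟨G, ?_, hG⟩
    by_contra hnc
    obtain ⟨v, w, hvw⟩ : ∃ v w, ¬ G.Reachable v w := by
      by_contra h; push_neg at h; exact hnc ⟨h⟩
    have hsum' : ∑ i, a i = 2 * G.edgeFinset.card := by
      rw [← G.sum_degrees_eq_twice_card_edges]
      exact Finset.sum_congr rfl fun i _ => (hG i).symm
    have hvwne : v ≠ w := fun h => hvw (h ▸ Reachable.refl v)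
    have hn2 : 2 ≤ n := by
      have := Fintype.one_lt_card_iff_nontrivial.mpr ⟨v, w, hvwne⟩
      rw [Fintype.card_fin] at this; omega
    have hcc2 : 2 ≤ Fintype.card G.ConnectedComponent :=
      Fintype.one_lt_card_iff_nontrivial.mpr
        ⟨_, _, fun h => hvw (ConnectedComponent.eq.mp h)⟩
    have hnac : ¬ G.IsAcyclic := by
      intro hac
      have := acyclic_card G hac
      rw [Fintype.card_fin] at this
      omega
    rw [isAcyclic_iff_forall_adj_isBridge] at hnac
    push_neg at hnac
    obtain ⟨x, y, hxy, hnbr⟩ := hnac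
    have hreach : (G.deleteEdges {s(x,y)}).Reachable x y := by
      rw [isBridge_iff] at hnbr
      push_neg at hnbr
      exact hnbr
    obtain ⟨u, hu⟩ : ∃ u, ¬ G.Reachable x u := by
      by_cases h : G.Reachable x v
      · exact ⟨w, fun h' => hvw (h.symm.trans h')⟩
      · exact ⟨v, h⟩
    have hdegu : 0 < G.degree u := by rw [hG u]; exact ha u
    obtain ⟨v₀, huv⟩ := G.degree_pos_iff_exists_adj u |>.mp hdegu
    have hyu : ¬ G.Reachable y u := fun h => hu (hxy.reachable.trans h)
    have hxv₀ : ¬ G.Reachable x v₀ := fun h => hu (h.trans huv.symm.reachable)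
    have hyv₀ : ¬ G.Reachable y v₀ := fun h => hyu (h.trans huv.symm.reachable)
    have nxy : x ≠ y := hxy.ne
    have nuv : u ≠ v₀ := huv.ne
    have nxu : x ≠ u := fun h => hu (h ▸ Reachable.refl x)
    have nxv : x ≠ v₀ := fun h => hxv₀ (h ▸ Reachable.refl x)
    have nyu : y ≠ u := fun h => hyu (h ▸ Reachable.refl y)
    have nyv : y ≠ v₀ := fun h => hyv₀ (h ▸ Reachable.refl y)
    have naxu : ¬ G.Adj x u := fun h => hu h.reachable
    have nayv : ¬ G.Adj y v₀ := fun h => hyv₀ h.reachable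
    let G₂ : SimpleGraph (Fin n) :=
      { Adj := fun p q =>
          (G.Adj p q ∧ s(p,q) ≠ s(x,y) ∧ s(p,q) ≠ s(u,v₀)) ∨
            s(p,q) = s(x,u) ∨ s(p,q) = s(y,v₀)
        symm := Std.Symm.mk <| by
          intro p q h
          rwa [show s(q,p) = s(p,q) from Sym2.eq_swap, G.adj_comm q p]
        loopless := Std.Irrefl.mk <| by
          intro p h
          rcases h with ⟨h, _, _⟩ | h | h
          · exact G.loopless.irrefl p h
          · rw [Sym2.eq_iff] at h
            rcases h with ⟨rfl, rfl⟩ | ⟨rfl, rfl⟩ <;> exact nxu rfl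
          · rw [Sym2.eq_iff] at h
            rcases h with ⟨rfl, rfl⟩ | ⟨rfl, rfl⟩ <;> exact nyv rfl }
    have hAdj : ∀ p q, G₂.Adj p q ↔
        ((G.Adj p q ∧ s(p,q) ≠ s(x,y) ∧ s(p,q) ≠ s(u,v₀)) ∨
          s(p,q) = s(x,u) ∨ s(p,q) = s(y,v₀)) := fun _ _ => Iff.rfl
    have hdeg₂ : ∀ i (inst : Fintype (G₂.neighborSet i)),
        @SimpleGraph.degree _ G₂ i inst = a i := by
      intro i inst
      rw [← hG i]
      by_cases hix : i = x
      · subst hix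
        refine degree_swap' (r := y) (s := u) inst _ hxy naxu fun q => ?_
        rw [hAdj]
        simp only [ne_eq, Sym2.eq_iff]
        constructor
        · rintro (⟨h, h1, h2⟩ | (⟨_, rfl⟩ | ⟨rfl, rfl⟩) | (⟨rfl, rfl⟩ | ⟨rfl, rfl⟩))
          · exact Or.inl ⟨h, fun hq => h1 (Or.inl ⟨trivial, hq⟩)⟩
          · exact Or.inr rfl
          · exact absurd rfl nxu
          · exact absurd rfl nxy
          · exact absurd rfl nxv
        · rintro (⟨h, hq⟩ | rfl)
          · refine Or.inl ⟨h, ?_, ?_⟩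
            · rintro (⟨-, rfl⟩ | ⟨rfl, -⟩)
              · exact hq rfl
              · exact nxy rfl
            · rintro (⟨rfl, -⟩ | ⟨rfl, -⟩)
              · exact nxu rfl
              · exact nxv rfl
          · exact Or.inr (Or.inl (Or.inl ⟨trivial, rfl⟩))
      · by_cases hiy : i = y
        · subst hiy
          refine degree_swap' (r := x) (s := v₀) inst _ hxy.symm nayv fun q => ?_
          rw [hAdj]
          simp only [ne_eq, Sym2.eq_iff]
          constructor
          · rintro (⟨h, h1, h2⟩ | (⟨rfl, rfl⟩ | ⟨rfl, rfl⟩) | (⟨_, rfl⟩ | ⟨rfl, rfl⟩))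
            · exact Or.inl ⟨h, fun hq => h1 (Or.inr ⟨trivial, hq⟩)⟩
            · exact absurd rfl nxy.symm
            · exact absurd rfl nyu
            · exact Or.inr rfl
            · exact absurd rfl nyv
          · rintro (⟨h, hq⟩ | rfl)
            · refine Or.inl ⟨h, ?_, ?_⟩
              · rintro (⟨rfl, -⟩ | ⟨-, rfl⟩)
                · exact nxy rfl
                · exact hq rfl
              · rintro (⟨rfl, -⟩ | ⟨rfl, -⟩)
                · exact nyu rfl
                · exact nyv rfl
            · exact Or.inr (Or.inr (Or.inl ⟨trivial, rfl⟩))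
        · by_cases hiu : i = u
          · subst hiu
            refine degree_swap' (r := v₀) (s := x) inst _ huv (fun h => naxu h.symm) fun q => ?_
            rw [hAdj]
            simp only [ne_eq, Sym2.eq_iff]
            constructor
            · rintro (⟨h, h1, h2⟩ | (⟨rfl, rfl⟩ | ⟨_, rfl⟩) | (⟨rfl, rfl⟩ | ⟨rfl, rfl⟩))
              · exact Or.inl ⟨h, fun hq => h2 (Or.inl ⟨trivial, hq⟩)⟩
              · exact absurd rfl nxu.symm
              · exact Or.inr rfl
              · exact absurd rfl nyu.symm
              · exact absurd rfl nuv
            · rintro (⟨h, hq⟩ | rfl)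
              · refine Or.inl ⟨h, ?_, ?_⟩
                · rintro (⟨rfl, -⟩ | ⟨rfl, -⟩)
                  · exact nxu rfl
                  · exact nyu rfl
                · rintro (⟨-, rfl⟩ | ⟨rfl, -⟩)
                  · exact hq rfl
                  · exact nuv rfl
              · exact Or.inr (Or.inl (Or.inr ⟨trivial, rfl⟩))
          · by_cases hiv : i = v₀
            · subst hiv
              refine degree_swap' (r := u) (s := y) inst _ huv.symm (fun h => nayv h.symm) fun q => ?_
              rw [hAdj]
              simp only [ne_eq, Sym2.eq_iff]
              constructor
              · rintro (⟨h, h1, h2⟩ | (⟨rfl, rfl⟩ | ⟨rfl, rfl⟩) | (⟨rfl, rfl⟩ | ⟨_, rfl⟩))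
                · exact Or.inl ⟨h, fun hq => h2 (Or.inr ⟨trivial, hq⟩)⟩
                · exact absurd rfl nxv.symm
                · exact absurd rfl nuv.symm
                · exact absurd rfl nyv.symm
                · exact Or.inr rfl
              · rintro (⟨h, hq⟩ | rfl)
                · refine Or.inl ⟨h, ?_, ?_⟩
                  · rintro (⟨rfl, -⟩ | ⟨rfl, -⟩)
                    · exact nxv rfl
                    · exact nyv rfl
                  · rintro (⟨rfl, -⟩ | ⟨-, rfl⟩)
                    · exact nuv rfl
                    · exact hq rfl
                · exact Or.inr (Or.inr (Or.inr ⟨trivial, rfl⟩))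
            · refine degree_congr' inst _ fun q => ?_
              rw [hAdj]
              simp only [ne_eq, Sym2.eq_iff]
              constructor
              · rintro (⟨h, -, -⟩ | (⟨rfl, -⟩ | ⟨rfl, -⟩) | (⟨rfl, -⟩ | ⟨rfl, -⟩))
                · exact h
                · exact absurd rfl hix
                · exact absurd rfl hiu
                · exact absurd rfl hiy
                · exact absurd rfl hiv
              · intro h
                refine Or.inl ⟨h, ?_, ?_⟩
                · rintro (⟨rfl, -⟩ | ⟨rfl, -⟩)
                  · exact hix rfl
                  · exact hiy rfl
                · rintro (⟨rfl, -⟩ | ⟨rfl, -⟩)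
                  · exact hiu rfl
                  · exact hiv rfl
    -- reachability facts about G₂
    have hxu₂ : G₂.Adj x u := Or.inr (Or.inl rfl)
    have hyv₂ : G₂.Adj y v₀ := Or.inr (Or.inr rfl)
    have hxy₂ : G₂.Reachable x y := by
      obtain ⟨W⟩ := hreach
      have hW : ∀ e ∈ W.edges, e ∈ G₂.edgeSet := by
        intro e
        induction e using Sym2.ind with
        | _ p q =>
          intro heW
          have heG' : s(p,q) ∈ (G.deleteEdges {s(x,y)}).edgeSet :=
            W.edges_subset_edgeSet heW
          rw [edgeSet_deleteEdges] at heG'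
          obtain ⟨heG, hexy⟩ := heG'
          rw [Set.mem_singleton_iff] at hexy
          have hp : p ∈ W.support := W.fst_mem_support_of_mem_edges heW
          have hq : q ∈ W.support := W.snd_mem_support_of_mem_edges heW
          have hrp : G.Reachable x p :=
            (reachable_of_mem_support W hp).mono (deleteEdges_le _)
          have hrq : G.Reachable x q :=
            (reachable_of_mem_support W hq).mono (deleteEdges_le _)
          have huv' : s(p,q) ≠ s(u,v₀) := by
            rw [ne_eq, Sym2.eq_iff]
            rintro (⟨rfl, rfl⟩ | ⟨rfl, rfl⟩)
            · exact hu hrp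
            · exact hu hrq
          exact (G₂.mem_edgeSet).mpr (Or.inl ⟨(G.mem_edgeSet).mp heG, hexy, huv'⟩)
      exact (W.transfer G₂ hW).reachable
    have huv₂ : G₂.Reachable u v₀ :=
      (hxu₂.symm.reachable.trans hxy₂).trans hyv₂.reachable
    have hstep : ∀ p q, G.Adj p q → G₂.Reachable p q := by
      intro p q hpq
      by_cases h1 : s(p,q) = s(x,y)
      · rw [Sym2.eq_iff] at h1
        rcases h1 with ⟨rfl, rfl⟩ | ⟨rfl, rfl⟩
        · exact hxy₂
        · exact hxy₂.symm
      · by_cases h2 : s(p,q) = s(u,v₀)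
        · rw [Sym2.eq_iff] at h2
          rcases h2 with ⟨rfl, rfl⟩ | ⟨rfl, rfl⟩
          · exact huv₂
          · exact huv₂.symm
        · exact (show G₂.Adj p q from Or.inl ⟨hpq, h1, h2⟩).reachable
    let φ : G.ConnectedComponent → G₂.ConnectedComponent :=
      ConnectedComponent.lift (fun z => G₂.connectedComponentMk z)
        (fun z z' p _ => ConnectedComponent.sound (reach_of_adj_reach hstep p.reachable))
    have hφs : Function.Surjective φ := by
      intro c
      obtain ⟨z, rfl⟩ := Quot.exists_rep c
      exact ⟨G.connectedComponentMk z, rfl⟩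
    have hφn : ¬ Function.Injective φ := by
      intro hinj
      have hx : G.connectedComponentMk x = G.connectedComponentMk u := by
        apply hinj
        simp only [φ, ConnectedComponent.lift_mk]
        exact ConnectedComponent.sound hxu₂.reachable
      exact hu (ConnectedComponent.eq.mp hx)
    have hlt : Fintype.card G₂.ConnectedComponent < Fintype.card G.ConnectedComponent :=
      Fintype.card_lt_of_surjective_not_injective φ hφs hφn
    have hmem : Fintype.card G₂.ConnectedComponent ∈ S := ⟨G₂, fun i => hdeg₂ i _, rfl⟩
    have := Nat.sInf_le hmem
    omega
end
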